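/- arXiv:2404.10098 — 3 statements merged into one kernel-verified Lean document; each statement's English description precedes it below -/
import Mathlib

section
/- Let ξ be a random vector in a normed space X and Q ⊆ X a subspace. Let ζ be a random vector in the dual X* such that ζ ∈ Q⊥ almost surely. Then for any 1 ≤ p < ∞, (E[dist(ξ,Q)^p])^{1/p} ≥ E[⟨ξ,ζ⟩] / (E[‖ζ‖_{X*}^{p'}])^{1/p'}, where p' is the Hölder conjugate of p, assuming all expectations are finite. -/
open MeasureTheory
open scoped ENNReal

/-- Auxiliary: a nonnegative function whose `p`-th power is integrable is in `ℒ^p`. -/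
lemma memLp_of_integrable_rpow {Ω : Type*} [MeasurableSpace Ω] {μ : Measure Ω}
    {f : Ω → ℝ} (hf0 : ∀ ω, 0 ≤ f ω) {p : ℝ} (hp : 0 < p)
    (hint : Integrable (fun ω => f ω ^ p) μ) : MemLp f (ENNReal.ofReal p) μ := by
  have hmeas : AEStronglyMeasurable f μ := by
    have : f = fun ω => (f ω ^ p) ^ p⁻¹ := by
      funext ω
      rw [← Real.rpow_mul (hf0 ω), mul_inv_cancel₀ hp.ne', Real.rpow_one]
    rw [this]
    exact (Real.continuous_rpow_const (inv_nonneg.mpr hp.le)).comp_aestronglyMeasurable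
      hint.aestronglyMeasurable
  have hq0 : (ENNReal.ofReal p) ≠ 0 := by
    simp [ENNReal.ofReal_eq_zero, not_le, hp]
  have hqt : (ENNReal.ofReal p) ≠ ⊤ := ENNReal.ofReal_ne_top
  have := (memLp_norm_rpow_iff (q := ENNReal.ofReal p) (p := ENNReal.ofReal p) hmeas hq0 hqt).mp
  rw [ENNReal.div_self hq0 hqt] at this
  apply this
  rw [memLp_one_iff_integrable]
  have heq : (fun x => ‖f x‖ ^ (ENNReal.ofReal p).toReal) = fun ω => f ω ^ p := by
    funext ω
    rw [Real.norm_of_nonneg (hf0 ω), ENNReal.toReal_ofReal hp.le]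
  rw [heq]
  exact hint

/-- Lemma 1: for a random vector `ξ` in `X`, a subspace `Q`, and a random functional `ζ`
lying a.s. in the annihilator of `Q`, with `1/p + 1/p' = 1`,
`(E dist(ξ,Q)^p)^{1/p} ≥ E⟨ξ,ζ⟩ / (E‖ζ‖^{p'})^{1/p'}`. -/
theorem stmt1 {X : Type*} [NormedAddCommGroup X] [NormedSpace ℝ X]
    {Ω : Type*} [MeasurableSpace Ω] (μ : Measure Ω) [IsProbabilityMeasure μ]
    (Q : Submodule ℝ X) (ξ : Ω → X) (ζ : Ω → X →L[ℝ] ℝ)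
    (p p' : ℝ) (hconj : p.HolderConjugate p')
    (hann : ∀ᵐ ω ∂μ, ∀ y ∈ Q, ζ ω y = 0)
    (h1 : Integrable (fun ω => (Metric.infDist (ξ ω) (Q : Set X)) ^ p) μ)
    (h2 : Integrable (fun ω => ζ ω (ξ ω)) μ)
    (h3 : Integrable (fun ω => ‖ζ ω‖ ^ p') μ) :
    (∫ ω, (Metric.infDist (ξ ω) (Q : Set X)) ^ p ∂μ) ^ (1/p)
      ≥ (∫ ω, ζ ω (ξ ω) ∂μ) / (∫ ω, ‖ζ ω‖ ^ p' ∂μ) ^ (1/p') := by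
  set f : Ω → ℝ := fun ω => Metric.infDist (ξ ω) (Q : Set X) with hf_def
  set g : Ω → ℝ := fun ω => ‖ζ ω‖ with hg_def
  have hf0 : ∀ ω, 0 ≤ f ω := fun ω => Metric.infDist_nonneg
  have hg0 : ∀ ω, 0 ≤ g ω := fun ω => norm_nonneg _
  have hfmem : MemLp f (ENNReal.ofReal p) μ :=
    memLp_of_integrable_rpow hf0 hconj.pos h1
  have hgmem : MemLp g (ENNReal.ofReal p') μ :=
    memLp_of_integrable_rpow hg0 hconj.symm.pos h3
  -- pointwise key inequality
  have key : ∀ᵐ ω ∂μ, ζ ω (ξ ω) ≤ g ω * f ω := by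
    filter_upwards [hann] with ω hω
    rcases eq_or_lt_of_le (norm_nonneg (ζ ω)) with h0 | h0
    · have hz : ζ ω = 0 := by
        rw [← norm_le_zero_iff]
        exact le_of_eq h0.symm
      simp only [hg_def, hz, ContinuousLinearMap.zero_apply, norm_zero, zero_mul, le_refl]
    · rw [mul_comm, ← div_le_iff₀ h0]
      show ζ ω (ξ ω) / ‖ζ ω‖ ≤ Metric.infDist (ξ ω) (Q : Set X)
      rw [Metric.infDist_eq_iInf]
      haveI : Nonempty (Q : Set X) := ⟨⟨0, Q.zero_mem⟩⟩
      refine le_ciInf fun y => ?_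
      rw [div_le_iff₀ h0, dist_eq_norm]
      calc ζ ω (ξ ω) = ζ ω (ξ ω - y) := by rw [map_sub, hω y y.2, sub_zero]
        _ ≤ ‖ζ ω (ξ ω - y)‖ := Real.le_norm_self _
        _ ≤ ‖ζ ω‖ * ‖ξ ω - y‖ := (ζ ω).le_opNorm _
        _ = ‖ξ ω - ↑y‖ * ‖ζ ω‖ := mul_comm _ _
  -- integrability of the product
  have hprod : Integrable (fun ω => g ω * f ω) μ := by
    have hsum : (1 : ℝ≥0∞) / 1 = 1 / (ENNReal.ofReal p') + 1 / (ENNReal.ofReal p) := by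
      simp only [one_div, inv_one]
      exact (hconj.symm.inv_add_inv_ennreal).symm
    have := hfmem.smul hgmem (r := 1) (hpqr := ⟨by simpa using hsum.symm⟩)
    rw [memLp_one_iff_integrable] at this
    exact this
  have step1 : ∫ ω, ζ ω (ξ ω) ∂μ ≤ ∫ ω, g ω * f ω ∂μ :=
    integral_mono_ae h2 hprod key
  have step2 : ∫ ω, g ω * f ω ∂μ
      ≤ (∫ ω, g ω ^ p' ∂μ) ^ (1 / p') * (∫ ω, f ω ^ p ∂μ) ^ (1 / p) :=
    integral_mul_le_Lp_mul_Lq_of_nonneg hconj.symm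
      (Filter.Eventually.of_forall hg0) (Filter.Eventually.of_forall hf0) hgmem hfmem
  have hLnonneg : 0 ≤ (∫ ω, f ω ^ p ∂μ) ^ (1 / p) :=
    Real.rpow_nonneg (integral_nonneg fun ω => Real.rpow_nonneg (hf0 ω) p) _
  set D : ℝ := (∫ ω, g ω ^ p' ∂μ) ^ (1 / p') with hD_def
  have hDnonneg : 0 ≤ D :=
    Real.rpow_nonneg (integral_nonneg fun ω => Real.rpow_nonneg (hg0 ω) p') _
  rcases eq_or_lt_of_le hDnonneg with hD0 | hDpos
  · rw [ge_iff_le, ← hD0, div_zero]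
    exact hLnonneg
  · rw [ge_iff_le, div_le_iff₀ hDpos]
    calc ∫ ω, ζ ω (ξ ω) ∂μ ≤ ∫ ω, g ω * f ω ∂μ := step1
      _ ≤ D * (∫ ω, f ω ^ p ∂μ) ^ (1 / p) := step2
      _ = (∫ ω, f ω ^ p ∂μ) ^ (1 / p) * D := mul_comm _ _
end

section
/- Let 1 < q ≤ 2 and let K ⊆ ℝ^N be a set that is unconditional (closed under arbitrary sign changes of coordinates) and invariant under cyclic shifts of coordinates. Then for any n < N, the Kolmogorov width satisfies d_n(K, ℓ_q^N) ≥ c_q (1 − n/N)^{1/q} sup_{x∈K} ‖x‖_q, for a constant c_q > 0 depending only on q. -/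
open MeasureTheory

/-- The ℓ_q norm on `ℝ^N`. -/
noncomputable def lqN {N : ℕ} (q : ℝ) (x : Fin N → ℝ) : ℝ := (∑ i, |x i| ^ q) ^ (1/q)

/-- Distance from `x` to a subspace `Q` in the ℓ_q norm. -/
noncomputable def distq {N : ℕ} (q : ℝ) (x : Fin N → ℝ) (Q : Submodule ℝ (Fin N → ℝ)) : ℝ :=
  ⨅ y : Q, lqN q (fun i => x i - (y : Fin N → ℝ) i)

/-- The Kolmogorov width `d_n(K, ℓ_q^N)`. -/
noncomputable def dKol {N : ℕ} (n : ℕ) (q : ℝ) (K : Set (Fin N → ℝ)) : ℝ :=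
  ⨅ Q : {Q : Submodule ℝ (Fin N → ℝ) // Module.finrank ℝ Q ≤ n},
    ⨆ x : K, distq q x.1 Q.1

set_option linter.unusedSectionVars false
set_option linter.unusedVariables false
set_option maxHeartbeats 1000000

namespace Stmt14Aux

section SignSpace

variable {ι : Type*} [Fintype ι] [DecidableEq ι]

def chi (b : Bool) : ℝ := if b then 1 else -1

lemma chi_mul_self (b : Bool) : chi b * chi b = 1 := by cases b <;> norm_num [chi]

lemma chi_not (b : Bool) : chi (!b) = - chi b := by cases b <;> norm_num [chi]

lemma chi_mul_le_abs (b : Bool) (z : ℝ) : chi b * z ≤ |z| := by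
  cases b <;> simp [chi]
  · exact neg_le_abs z
  · exact le_abs_self z

/-- Flip the `i`-th sign. -/
def flipAt (i : ι) (ε : ι → Bool) : ι → Bool := Function.update ε i (!(ε i))

lemma flipAt_apply_self (i : ι) (ε : ι → Bool) : flipAt i ε i = !(ε i) := by
  simp [flipAt]

lemma flipAt_apply_ne (i : ι) (ε : ι → Bool) {j : ι} (h : j ≠ i) :
    flipAt i ε j = ε j := by
  simp [flipAt, Function.update_of_ne h]

lemma flipAt_involutive (i : ι) : Function.Involutive (flipAt i) := by
  intro ε
  funext j
  by_cases h : j = i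
  · subst h; simp [flipAt]
  · rw [flipAt_apply_ne i _ h, flipAt_apply_ne i _ h]

/-- Flipping the `i`-th sign as an equivalence. -/
def flipEquiv (i : ι) : (ι → Bool) ≃ (ι → Bool) := (flipAt_involutive i).toPerm _

lemma flipEquiv_apply (i : ι) (ε : ι → Bool) : flipEquiv i ε = flipAt i ε := rfl

lemma sum_comp_flip {M : Type*} [AddCommMonoid M] (i : ι) (F : (ι → Bool) → M) :
    ∑ ε : ι → Bool, F (flipAt i ε) = ∑ ε : ι → Bool, F ε :=
  Equiv.sum_comp (flipEquiv i) F

/-- Orthogonality of distinct signs. -/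
lemma sum_chi_chi (i j : ι) :
    ∑ ε : ι → Bool, chi (ε i) * chi (ε j)
      = if i = j then (Fintype.card (ι → Bool) : ℝ) else 0 := by
  rcases eq_or_ne i j with h | h
  · subst h
    simp [chi_mul_self, Finset.sum_const, Finset.card_univ]
  · simp only [if_neg h]
    have key : ∑ ε : ι → Bool, chi (ε i) * chi (ε j)
        = - ∑ ε : ι → Bool, chi (ε i) * chi (ε j) := by
      conv_lhs => rw [← sum_comp_flip i]
      rw [← Finset.sum_neg_distrib]
      refine Finset.sum_congr rfl fun ε _ => ?_
      rw [flipAt_apply_self, flipAt_apply_ne i ε h.symm, chi_not]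
      ring
    linarith

def Kc : ℕ → ℕ
  | 0 => 1
  | (k+1) => (4*(k+1)) * Kc k

lemma Kc_pos (k : ℕ) : 0 < Kc k := by
  induction k with
  | zero => simp [Kc]
  | succ k ih => exact Nat.mul_pos (by omega) ih

lemma one_le_Kc (k : ℕ) : (1:ℝ) ≤ (Kc k : ℝ) := by
  exact_mod_cast Nat.one_le_iff_ne_zero.2 (Kc_pos k).ne'

lemma pow_mix_le {a b : ℝ} (ha : 0 ≤ a) (hb : 0 ≤ b) {i m : ℕ} (him : i ≤ m) :
    a ^ i * b ^ (m - i) ≤ a ^ m + b ^ m := by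
  rcases le_total a b with hab | hab
  · calc a ^ i * b ^ (m - i) ≤ b ^ i * b ^ (m - i) := by
          exact mul_le_mul_of_nonneg_right (pow_le_pow_left₀ ha hab i) (pow_nonneg hb _)
    _ = b ^ m := by rw [← pow_add]; congr 1; omega
    _ ≤ a ^ m + b ^ m := le_add_of_nonneg_left (pow_nonneg ha _)
  · calc a ^ i * b ^ (m - i) ≤ a ^ i * a ^ (m - i) := by
          exact mul_le_mul_of_nonneg_left (pow_le_pow_left₀ hb hab _) (pow_nonneg ha _)
    _ = a ^ m := by rw [← pow_add]; congr 1; omega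
    _ ≤ a ^ m + b ^ m := le_add_of_nonneg_right (pow_nonneg hb _)

/-- Even moment bound for Rademacher sums. -/
lemma moment_bound (c : ι → ℝ) (k : ℕ) :
    ∑ ε : ι → Bool, (∑ j, c j * chi (ε j)) ^ (2*k)
      ≤ (Kc k : ℝ) * (Fintype.card (ι → Bool) : ℝ) * (∑ j, c j ^ 2) ^ k := by
  induction k with
  | zero => simp [Kc]
  | succ k ih =>
    have hflipZ : ∀ (j : ι) (ε : ι → Bool),
        (∑ j', c j' * chi (flipAt j ε j')) = (∑ j', c j' * chi (ε j')) - 2 * c j * chi (ε j) := by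
      intro j ε
      have h3 : ∑ j', (c j' * chi (flipAt j ε j') - c j' * chi (ε j')) = -2 * c j * chi (ε j) := by
        rw [Finset.sum_eq_single j]
        · rw [flipAt_apply_self, chi_not]; ring
        · intro b _ hb; rw [flipAt_apply_ne j ε hb]; ring
        · intro h; exact absurd (Finset.mem_univ j) h
      rw [Finset.sum_sub_distrib] at h3
      linarith
    set Z : (ι → Bool) → ℝ := fun ε => ∑ j, c j * chi (ε j) with hZdef
    have hflipZ' : ∀ (j : ι) (ε : ι → Bool), Z (flipAt j ε) = Z ε - 2 * c j * chi (ε j) :=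
      fun j ε => hflipZ j ε
    have hT_nonneg : (0:ℝ) ≤ ∑ ε : ι → Bool, Z ε ^ (2*k) :=
      Finset.sum_nonneg fun ε _ => (even_two_mul k).pow_nonneg _
    -- the geometric-sum factor
    set G : ι → (ι → Bool) → ℝ := fun j ε =>
      ∑ i ∈ Finset.range (2*k+1), Z ε ^ i * Z (flipAt j ε) ^ (2*k+1-1-i) with hGdef
    have step : ∀ (j : ι) (ε : ι → Bool),
        chi (ε j) * (Z ε ^ (2*k+1) - Z (flipAt j ε) ^ (2*k+1)) = 2 * c j * G j ε := by
      intro j ε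
      have hg := geom_sum₂_mul (Z ε) (Z (flipAt j ε)) (2*k+1)
      have hz : Z ε - Z (flipAt j ε) = 2 * c j * chi (ε j) := by rw [hflipZ']; ring
      have hc := chi_mul_self (ε j)
      calc chi (ε j) * (Z ε ^ (2*k+1) - Z (flipAt j ε) ^ (2*k+1))
          = chi (ε j) * (G j ε * (Z ε - Z (flipAt j ε))) := by rw [hg]
        _ = chi (ε j) * (G j ε * (2 * c j * chi (ε j))) := by rw [hz]
        _ = 2 * c j * G j ε * (chi (ε j) * chi (ε j)) := by ring
        _ = 2 * c j * G j ε := by rw [hc]; ring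
    -- doubling identity for S_j
    have hS : ∀ j : ι, 2 * (∑ ε : ι → Bool, chi (ε j) * Z ε ^ (2*k+1))
        = ∑ ε : ι → Bool, 2 * c j * G j ε := by
      intro j
      have h1 : (∑ ε : ι → Bool, chi (ε j) * Z ε ^ (2*k+1))
          = ∑ ε : ι → Bool, -(chi (ε j) * Z (flipAt j ε) ^ (2*k+1)) := by
        conv_lhs => rw [← sum_comp_flip j (fun ε => chi (ε j) * Z ε ^ (2*k+1))]
        refine Finset.sum_congr rfl fun ε _ => ?_
        rw [flipAt_apply_self, chi_not]; ring
      calc 2 * (∑ ε : ι → Bool, chi (ε j) * Z ε ^ (2*k+1))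
          = (∑ ε : ι → Bool, chi (ε j) * Z ε ^ (2*k+1))
            + ∑ ε : ι → Bool, -(chi (ε j) * Z (flipAt j ε) ^ (2*k+1)) := by rw [← h1]; ring
        _ = ∑ ε : ι → Bool, (chi (ε j) * Z ε ^ (2*k+1)
              + -(chi (ε j) * Z (flipAt j ε) ^ (2*k+1))) := by rw [Finset.sum_add_distrib]
        _ = ∑ ε : ι → Bool, 2 * c j * G j ε := by
            refine Finset.sum_congr rfl fun ε _ => ?_
            rw [← step j ε]; ring
    -- bound on |G|
    have hG_le : ∀ (j : ι) (ε : ι → Bool),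
        |G j ε| ≤ (2*k+1 : ℝ) * (Z ε ^ (2*k) + Z (flipAt j ε) ^ (2*k)) := by
      intro j ε
      calc |G j ε| ≤ ∑ i ∈ Finset.range (2*k+1), |Z ε ^ i * Z (flipAt j ε) ^ (2*k+1-1-i)| :=
            Finset.abs_sum_le_sum_abs _ _
        _ ≤ ∑ _i ∈ Finset.range (2*k+1), (Z ε ^ (2*k) + Z (flipAt j ε) ^ (2*k)) := by
            refine Finset.sum_le_sum fun i hi => ?_
            have hi' : i ≤ 2*k := by
              have := Finset.mem_range.1 hi; omega
            have h2 : (2*k+1-1-i) = 2*k - i := by omega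
            rw [h2, abs_mul, abs_pow, abs_pow]
            calc |Z ε| ^ i * |Z (flipAt j ε)| ^ (2*k - i)
                ≤ |Z ε| ^ (2*k) + |Z (flipAt j ε)| ^ (2*k) :=
                  pow_mix_le (abs_nonneg _) (abs_nonneg _) hi'
              _ = Z ε ^ (2*k) + Z (flipAt j ε) ^ (2*k) := by
                  rw [(even_two_mul k).pow_abs, (even_two_mul k).pow_abs]
        _ = (2*k+1 : ℝ) * (Z ε ^ (2*k) + Z (flipAt j ε) ^ (2*k)) := by
            rw [Finset.sum_const, Finset.card_range]; push_cast; ring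
    -- bound on c j * S_j
    have hcS : ∀ j : ι, c j * (∑ ε : ι → Bool, chi (ε j) * Z ε ^ (2*k+1))
        ≤ c j ^ 2 * ((2*(2*k+1) : ℝ) * ∑ ε : ι → Bool, Z ε ^ (2*k)) := by
      intro j
      have hSj : c j * (∑ ε : ι → Bool, chi (ε j) * Z ε ^ (2*k+1))
          = c j ^ 2 * ∑ ε : ι → Bool, G j ε := by
        have := hS j
        have h2 : (∑ ε : ι → Bool, 2 * c j * G j ε) = 2 * c j * ∑ ε : ι → Bool, G j ε := by
          rw [Finset.mul_sum]
        rw [h2] at this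
        have hS2 : (∑ ε : ι → Bool, chi (ε j) * Z ε ^ (2*k+1)) = c j * ∑ ε : ι → Bool, G j ε := by
          linarith
        rw [hS2]; ring
      rw [hSj]
      have habs : (∑ ε : ι → Bool, G j ε) ≤ (2*(2*k+1) : ℝ) * ∑ ε : ι → Bool, Z ε ^ (2*k) := by
        have hflipsum : ∑ ε : ι → Bool, Z (flipAt j ε) ^ (2*k) = ∑ ε : ι → Bool, Z ε ^ (2*k) :=
          sum_comp_flip j (fun ε => Z ε ^ (2*k))
        calc (∑ ε : ι → Bool, G j ε) ≤ ∑ ε : ι → Bool, |G j ε| :=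
              Finset.sum_le_sum fun ε _ => le_abs_self _
          _ ≤ ∑ ε : ι → Bool, (2*k+1 : ℝ) * (Z ε ^ (2*k) + Z (flipAt j ε) ^ (2*k)) :=
              Finset.sum_le_sum fun ε _ => hG_le j ε
          _ = (2*(2*k+1) : ℝ) * ∑ ε : ι → Bool, Z ε ^ (2*k) := by
              rw [← Finset.mul_sum, Finset.sum_add_distrib, hflipsum]; ring
      exact mul_le_mul_of_nonneg_left habs (sq_nonneg _)
    -- put it together
    have hsplit : ∑ ε : ι → Bool, Z ε ^ (2*(k+1))
        = ∑ j, c j * (∑ ε : ι → Bool, chi (ε j) * Z ε ^ (2*k+1)) := by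
      have h1 : ∀ ε : ι → Bool, Z ε ^ (2*(k+1)) = ∑ j, c j * (chi (ε j) * Z ε ^ (2*k+1)) := by
        intro ε
        have h2e : 2*(k+1) = (2*k+1)+1 := by omega
        have : Z ε ^ (2*(k+1)) = Z ε * Z ε ^ (2*k+1) := by
          rw [h2e, pow_succ]; ring
        rw [this]
        calc Z ε * Z ε ^ (2*k+1) = (∑ j, c j * chi (ε j)) * Z ε ^ (2*k+1) := rfl
          _ = ∑ j, c j * (chi (ε j) * Z ε ^ (2*k+1)) := by
              rw [Finset.sum_mul]; refine Finset.sum_congr rfl fun j _ => by ring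
      calc ∑ ε : ι → Bool, Z ε ^ (2*(k+1))
          = ∑ ε : ι → Bool, ∑ j, c j * (chi (ε j) * Z ε ^ (2*k+1)) :=
            Finset.sum_congr rfl fun ε _ => h1 ε
        _ = ∑ j, c j * (∑ ε : ι → Bool, chi (ε j) * Z ε ^ (2*k+1)) := by
            rw [Finset.sum_comm]
            exact Finset.sum_congr rfl fun j _ => by rw [Finset.mul_sum]
    calc ∑ ε : ι → Bool, Z ε ^ (2*(k+1))
        = ∑ j, c j * (∑ ε : ι → Bool, chi (ε j) * Z ε ^ (2*k+1)) := hsplit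
      _ ≤ ∑ j, c j ^ 2 * ((2*(2*k+1) : ℝ) * ∑ ε : ι → Bool, Z ε ^ (2*k)) :=
          Finset.sum_le_sum fun j _ => hcS j
      _ = (2*(2*k+1) : ℝ) * (∑ j, c j ^ 2) * (∑ ε : ι → Bool, Z ε ^ (2*k)) := by
          rw [← Finset.sum_mul]; ring
      _ ≤ (2*(2*k+1) : ℝ) * (∑ j, c j ^ 2)
            * ((Kc k : ℝ) * (Fintype.card (ι → Bool) : ℝ) * (∑ j, c j ^ 2) ^ k) := by
          have hnn : (0:ℝ) ≤ (2*(2*k+1) : ℝ) * (∑ j, c j ^ 2) := by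
            have : (0:ℝ) ≤ ∑ j, c j ^ 2 := Finset.sum_nonneg fun j _ => sq_nonneg _
            positivity
          exact mul_le_mul_of_nonneg_left ih hnn
      _ ≤ (Kc (k+1) : ℝ) * (Fintype.card (ι → Bool) : ℝ) * (∑ j, c j ^ 2) ^ (k+1) := by
          have hσ : (0:ℝ) ≤ ∑ j, c j ^ 2 := Finset.sum_nonneg fun j _ => sq_nonneg _
          have hK : (Kc (k+1) : ℝ) = (4*(k+1) : ℝ) * (Kc k : ℝ) := by
            show ((Kc (k+1) : ℕ) : ℝ) = _
            rw [show Kc (k+1) = (4*(k+1)) * Kc k from rfl]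
            push_cast; ring
          have hpow : (∑ j, c j ^ 2) ^ (k+1) = (∑ j, c j ^ 2) * (∑ j, c j ^ 2) ^ k := by
            rw [pow_succ]; ring
          rw [hK, hpow]
          have h1 : (2*(2*k+1) : ℝ) ≤ (4*(k+1) : ℝ) := by push_cast; linarith
          have hcard : (0:ℝ) ≤ (Fintype.card (ι → Bool) : ℝ) := Nat.cast_nonneg _
          have hKk : (0:ℝ) ≤ (Kc k : ℝ) := Nat.cast_nonneg _
          have hpk : (0:ℝ) ≤ (∑ j, c j ^ 2) ^ k := pow_nonneg hσ k
          nlinarith [mul_nonneg (mul_nonneg hKk hcard) (mul_nonneg hσ hpk)]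


/-- Khintchine inequality with real exponent `r ≥ 2`. -/
lemma khintchine_rpow {r : ℝ} (hr : 2 ≤ r) (c : ι → ℝ) :
    ∑ ε : ι → Bool, |∑ j, c j * chi (ε j)| ^ r
      ≤ (Kc ⌈r⌉₊ : ℝ) * (Fintype.card (ι → Bool) : ℝ) * (∑ j, c j ^ 2) ^ (r/2) := by
  classical
  set k : ℕ := ⌈r⌉₊ with hk
  have hrpos : (0:ℝ) < r := lt_of_lt_of_le (by norm_num) hr
  have hrk : r ≤ 2*k := by
    have h1 : r ≤ (k:ℝ) := Nat.le_ceil r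
    have h2 : (0:ℝ) ≤ (k:ℝ) := Nat.cast_nonneg _
    linarith
  have hMpos : (0:ℝ) < (Fintype.card (ι → Bool) : ℝ) := by
    exact_mod_cast Fintype.card_pos
  set M : ℝ := (Fintype.card (ι → Bool) : ℝ) with hM
  set σ2 : ℝ := ∑ j, c j ^ 2 with hσ2
  have hσ2_nonneg : 0 ≤ σ2 := Finset.sum_nonneg fun j _ => sq_nonneg _
  set Z : (ι → Bool) → ℝ := fun ε => ∑ j, c j * chi (ε j) with hZ
  -- mean-power inequality: apply arith_mean_le_rpow_mean with weights 1/M, z = |Z|^r, p = 2k/r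
  have hp1 : (1:ℝ) ≤ (2*k)/r := by
    rw [le_div_iff₀ hrpos]; linarith
  have key : ∑ ε : ι → Bool, (1/M) * |Z ε| ^ r
      ≤ (∑ ε : ι → Bool, (1/M) * (|Z ε| ^ r) ^ ((2*k)/r)) ^ (1/((2*k)/r)) := by
    refine Real.arith_mean_le_rpow_mean Finset.univ _ _
      (fun ε _ => by positivity) ?_ (fun ε _ => by positivity) hp1
    rw [Finset.sum_const, Finset.card_univ, nsmul_eq_mul, mul_one_div]
    exact div_self (ne_of_gt hMpos)
  have hzr : ∀ ε : ι → Bool, (|Z ε| ^ r) ^ ((2*(k:ℝ))/r) = Z ε ^ (2*k) := by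
    intro ε
    rw [← Real.rpow_mul (abs_nonneg (Z ε))]
    have hexp : r * (2*(k:ℝ)/r) = ((2*k : ℕ) : ℝ) := by
      push_cast; field_simp
    rw [hexp, Real.rpow_natCast, (even_two_mul k).pow_abs]
  -- rewrite key using hzr
  have key2 : ∑ ε : ι → Bool, (1/M) * |Z ε| ^ r
      ≤ ((1/M) * ∑ ε : ι → Bool, Z ε ^ (2*k)) ^ (r/(2*(k:ℝ))) := by
    have h1 : (∑ ε : ι → Bool, (1/M) * (|Z ε| ^ r) ^ ((2*(k:ℝ))/r))
        = (1/M) * ∑ ε : ι → Bool, Z ε ^ (2*k) := by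
      rw [← Finset.mul_sum]
      congr 1
      exact Finset.sum_congr rfl fun ε _ => hzr ε
    have h2 : 1/((2*(k:ℝ))/r) = r/(2*(k:ℝ)) := by
      rw [one_div_div]
    calc ∑ ε : ι → Bool, (1/M) * |Z ε| ^ r
        ≤ (∑ ε : ι → Bool, (1/M) * (|Z ε| ^ r) ^ ((2*(k:ℝ))/r)) ^ (1/((2*(k:ℝ))/r)) := key
      _ = ((1/M) * ∑ ε : ι → Bool, Z ε ^ (2*k)) ^ (r/(2*(k:ℝ))) := by rw [h1, h2]
  have hkpos : (0:ℝ) < 2*(k:ℝ) := by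
    have : (2:ℝ) ≤ (k:ℝ) := by
      have := Nat.le_ceil r
      have h2k : (2:ℝ) ≤ (⌈r⌉₊ : ℝ) := le_trans hr (Nat.le_ceil r)
      exact_mod_cast h2k
    linarith
  have hmom : (1/M) * ∑ ε : ι → Bool, Z ε ^ (2*k) ≤ (Kc k : ℝ) * σ2 ^ k := by
    have h' : ∑ ε : ι → Bool, Z ε ^ (2*k) ≤ (Kc k : ℝ) * M * σ2 ^ k := moment_bound c k
    rw [div_mul_eq_mul_div, div_le_iff₀ hMpos, one_mul]
    calc ∑ ε : ι → Bool, Z ε ^ (2*k) ≤ (Kc k : ℝ) * M * σ2 ^ k := h'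
      _ = (Kc k : ℝ) * σ2 ^ k * M := by ring
  have hsum_nonneg : (0:ℝ) ≤ (1/M) * ∑ ε : ι → Bool, Z ε ^ (2*k) := by
    have : (0:ℝ) ≤ ∑ ε : ι → Bool, Z ε ^ (2*k) :=
      Finset.sum_nonneg fun ε _ => (even_two_mul k).pow_nonneg _
    positivity
  have hrdk_nonneg : (0:ℝ) ≤ r/(2*(k:ℝ)) := by positivity
  have key3 : ((1/M) * ∑ ε : ι → Bool, Z ε ^ (2*k)) ^ (r/(2*(k:ℝ)))
      ≤ ((Kc k : ℝ) * σ2 ^ k) ^ (r/(2*(k:ℝ))) :=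
    Real.rpow_le_rpow hsum_nonneg hmom hrdk_nonneg
  have key4 : ((Kc k : ℝ) * σ2 ^ k) ^ (r/(2*(k:ℝ))) ≤ (Kc k : ℝ) * σ2 ^ (r/2) := by
    have hKnn : (0:ℝ) ≤ (Kc k : ℝ) := Nat.cast_nonneg _
    have hσk : (0:ℝ) ≤ σ2 ^ k := pow_nonneg hσ2_nonneg _
    rw [Real.mul_rpow hKnn hσk]
    have h1 : ((Kc k : ℝ)) ^ (r/(2*(k:ℝ))) ≤ (Kc k : ℝ) := by
      have hle1 : r/(2*(k:ℝ)) ≤ 1 := by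
        rw [div_le_one hkpos]; exact hrk
      calc ((Kc k : ℝ)) ^ (r/(2*(k:ℝ))) ≤ ((Kc k : ℝ)) ^ (1:ℝ) :=
          Real.rpow_le_rpow_of_exponent_le (one_le_Kc k) hle1
        _ = (Kc k : ℝ) := Real.rpow_one _
    have h2 : (σ2 ^ k : ℝ) ^ (r/(2*(k:ℝ))) = σ2 ^ (r/2) := by
      rw [← Real.rpow_natCast σ2 k, ← Real.rpow_mul hσ2_nonneg]
      congr 1
      rw [mul_div_assoc', mul_comm (2:ℝ) (k:ℝ), mul_div_mul_left r 2 (ne_of_gt (by linarith : (0:ℝ) < k))]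
    rw [h2]
    have hσr : (0:ℝ) ≤ σ2 ^ (r/2) := Real.rpow_nonneg hσ2_nonneg _
    exact mul_le_mul_of_nonneg_right h1 hσr
  -- put everything together
  have final : ∑ ε : ι → Bool, (1/M) * |Z ε| ^ r ≤ (Kc k : ℝ) * σ2 ^ (r/2) :=
    le_trans key2 (le_trans key3 key4)
  have hM' : ∑ ε : ι → Bool, |Z ε| ^ r = M * ∑ ε : ι → Bool, (1/M) * |Z ε| ^ r := by
    rw [← Finset.mul_sum, ← mul_assoc, mul_one_div, div_self (ne_of_gt hMpos), one_mul]
  calc ∑ ε : ι → Bool, |Z ε| ^ r = M * ∑ ε : ι → Bool, (1/M) * |Z ε| ^ r := hM'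
    _ ≤ M * ((Kc k : ℝ) * σ2 ^ (r/2)) := mul_le_mul_of_nonneg_left final (le_of_lt hMpos)
    _ = (Kc k : ℝ) * M * σ2 ^ (r/2) := by ring


end SignSpace

lemma exists_on_family {N : ℕ} (Q : Submodule ℝ (Fin N → ℝ)) :
    ∃ (r : ℕ) (b : Fin r → (Fin N → ℝ)),
      r + Module.finrank ℝ Q = N ∧
      (∀ t u, ∑ i, b t i * b u i = if t = u then (1:ℝ) else 0) ∧
      (∀ z ∈ Q, ∀ t, ∑ i, z i * b t i = 0) := by
  classical
  let e : EuclideanSpace ℝ (Fin N) ≃ₗ[ℝ] (Fin N → ℝ) := WithLp.linearEquiv 2 ℝ (Fin N → ℝ)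
  let Q' : Submodule ℝ (EuclideanSpace ℝ (Fin N)) := Q.comap e.toLinearMap
  let L : Submodule ℝ (EuclideanSpace ℝ (Fin N)) := Q'ᗮ
  let r : ℕ := Module.finrank ℝ L
  let ob : OrthonormalBasis (Fin r) ℝ L := stdOrthonormalBasis ℝ L
  have hon : Orthonormal ℝ (fun t => ((ob t : L) : EuclideanSpace ℝ (Fin N))) :=
    ob.orthonormal.comp_linearIsometry L.subtypeₗᵢ
  have hcoord : ∀ (v : EuclideanSpace ℝ (Fin N)) (i : Fin N), (e v) i = v i := fun v i => rfl
  have hinner : ∀ (v w : EuclideanSpace ℝ (Fin N)),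
      (inner ℝ v w : ℝ) = ∑ i, v i * w i := by
    intro v w
    rw [PiLp.inner_apply]
    refine Finset.sum_congr rfl fun i _ => ?_
    simp [RCLike.inner_apply, mul_comm]
  refine ⟨r, fun t => (e ((ob t : L) : EuclideanSpace ℝ (Fin N))), ?_, ?_, ?_⟩
  · -- dimension count
    have h1 : Module.finrank ℝ Q' + Module.finrank ℝ L = Module.finrank ℝ (EuclideanSpace ℝ (Fin N)) :=
      Submodule.finrank_add_finrank_orthogonal Q'
    have h2 : Module.finrank ℝ (EuclideanSpace ℝ (Fin N)) = N := finrank_euclideanSpace_fin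
    have h3 : Module.finrank ℝ Q' = Module.finrank ℝ Q := by
      have hQm : Q' = Q.map e.symm.toLinearMap := by
        ext v
        constructor
        · intro h
          exact ⟨e v, h, by simp⟩
        · rintro ⟨w, hw, rfl⟩
          simpa [Q', Submodule.mem_comap] using hw
      rw [hQm]
      exact LinearEquiv.finrank_map_eq e.symm Q
    omega
  · -- orthonormality
    intro t u
    have h := (orthonormal_iff_ite.mp hon) t u
    rw [hinner] at h
    calc ∑ i, (e ((ob t : L) : EuclideanSpace ℝ (Fin N))) i * (e ((ob u : L) : EuclideanSpace ℝ (Fin N))) i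
        = ∑ i, ((ob t : L) : EuclideanSpace ℝ (Fin N)) i * ((ob u : L) : EuclideanSpace ℝ (Fin N)) i := by
          refine Finset.sum_congr rfl fun i _ => by rw [hcoord, hcoord]
      _ = if t = u then (1:ℝ) else 0 := h
  · -- orthogonal to Q
    intro z hz t
    have hzQ' : e.symm z ∈ Q' := by
      simp only [Q', Submodule.mem_comap]
      simpa using hz
    have hperp : ((ob t : L) : EuclideanSpace ℝ (Fin N)) ∈ Q'ᗮ := (ob t).2
    have h0 : (inner ℝ (e.symm z) ((ob t : L) : EuclideanSpace ℝ (Fin N)) : ℝ) = 0 :=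
      (Submodule.mem_orthogonal Q' _).mp hperp (e.symm z) hzQ'
    rw [hinner] at h0
    calc ∑ i, z i * (e ((ob t : L) : EuclideanSpace ℝ (Fin N))) i
        = ∑ i, (e.symm z) i * ((ob t : L) : EuclideanSpace ℝ (Fin N)) i := by
          refine Finset.sum_congr rfl fun i _ => ?_
          rw [hcoord]
          congr 1
      _ = 0 := h0


/-- Jensen-type inequality for subprobability weights. -/
lemma jensen_aux {ι : Type} [Fintype ι] (M h : ι → ℝ) (hM : ∀ j, 0 ≤ M j)
    (hMsum : ∑ j, M j ≤ 1) (hh : ∀ j, 0 ≤ h j) {θ : ℝ} (hθ : 1 ≤ θ) :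
    (∑ j, M j * h j) ^ θ ≤ ∑ j, M j * (h j) ^ θ := by
  have hθ0 : (0:ℝ) < θ := lt_of_lt_of_le zero_lt_one hθ
  rcases eq_or_lt_of_le (Finset.sum_nonneg fun j _ => hM j) with hR0 | hRpos
  · -- all weights vanish
    have hall : ∀ j ∈ Finset.univ, M j = 0 :=
      (Finset.sum_eq_zero_iff_of_nonneg fun j _ => hM j).mp hR0.symm
    have h1 : (∑ j, M j * h j) = 0 :=
      Finset.sum_eq_zero fun j hj => by rw [hall j hj, zero_mul]
    have h2 : (∑ j, M j * (h j) ^ θ) = 0 :=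
      Finset.sum_eq_zero fun j hj => by rw [hall j hj, zero_mul]
    rw [h1, h2, Real.zero_rpow (ne_of_gt hθ0)]
  · set R : ℝ := ∑ j, M j with hR
    have hRnn : 0 ≤ R := le_of_lt hRpos
    have hmean := Real.rpow_arith_mean_le_arith_mean_rpow Finset.univ
      (fun j => M j / R) h (fun j _ => div_nonneg (hM j) hRnn)
      (by rw [← Finset.sum_div]; exact div_self (ne_of_gt hRpos)) (fun j _ => hh j) hθ
    have e1 : (∑ j, M j / R * h j) = (∑ j, M j * h j) / R := by
      rw [Finset.sum_div]
      exact Finset.sum_congr rfl fun j _ => by ring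
    have e2 : (∑ j, M j / R * (h j) ^ θ) = (∑ j, M j * (h j) ^ θ) / R := by
      rw [Finset.sum_div]
      exact Finset.sum_congr rfl fun j _ => by ring
    rw [e1, e2] at hmean
    have hS_nonneg : 0 ≤ ∑ j, M j * h j :=
      Finset.sum_nonneg fun j _ => mul_nonneg (hM j) (hh j)
    have hT_nonneg : 0 ≤ ∑ j, M j * (h j) ^ θ :=
      Finset.sum_nonneg fun j _ => mul_nonneg (hM j) (Real.rpow_nonneg (hh j) θ)
    have hdiv : ((∑ j, M j * h j) / R) ^ θ = (∑ j, M j * h j) ^ θ / R ^ θ :=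
      Real.div_rpow hS_nonneg hRnn θ
    rw [hdiv] at hmean
    -- (S^θ)/(R^θ) ≤ T/R  ⟹  S^θ ≤ R^(θ-1) T ≤ T
    have hRθpos : 0 < R ^ θ := Real.rpow_pos_of_pos hRpos θ
    rw [div_le_div_iff₀ hRθpos hRpos] at hmean
    -- hmean : S^θ * R ≤ T * R^θ
    have hRθ_le : R ^ θ ≤ R := by
      calc R ^ θ ≤ R ^ (1:ℝ) := by
            apply Real.rpow_le_rpow_of_exponent_ge hRpos hMsum hθ
        _ = R := Real.rpow_one R
    calc (∑ j, M j * h j) ^ θ = ((∑ j, M j * h j) ^ θ * R) / R := by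
          field_simp
      _ ≤ ((∑ j, M j * (h j) ^ θ) * R ^ θ) / R := (div_le_div_iff_of_pos_right hRpos).mpr hmean
      _ ≤ ((∑ j, M j * (h j) ^ θ) * R) / R := by
          exact (div_le_div_iff_of_pos_right hRpos).mpr (mul_le_mul_of_nonneg_left hRθ_le hT_nonneg)
      _ = ∑ j, M j * (h j) ^ θ := by field_simp


/-- The constant `c_q`. -/
noncomputable def cq (q : ℝ) : ℝ :=
  (1/(2 * (Kc ⌈Real.conjExponent q⌉₊ : ℝ))) ^ (1/(Real.conjExponent q)) * ((1:ℝ)/2) ^ (1/q)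

lemma cq_pos (q : ℝ) : 0 < cq q := by
  have h1 : (0:ℝ) < (Kc ⌈Real.conjExponent q⌉₊ : ℝ) := by exact_mod_cast Kc_pos _
  have h2 : (0:ℝ) < 1/(2 * (Kc ⌈Real.conjExponent q⌉₊ : ℝ)) := by positivity
  exact mul_pos (Real.rpow_pos_of_pos h2 _) (Real.rpow_pos_of_pos one_half_pos _)

lemma lqN_nonneg {N : ℕ} (q : ℝ) (x : Fin N → ℝ) : 0 ≤ lqN q x :=
  Real.rpow_nonneg (Finset.sum_nonneg fun i _ => Real.rpow_nonneg (abs_nonneg _) q) _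

lemma distq_nonneg {N : ℕ} (q : ℝ) (x : Fin N → ℝ) (Q : Submodule ℝ (Fin N → ℝ)) :
    0 ≤ distq q x Q :=
  Real.iInf_nonneg fun y => lqN_nonneg q _

open Fin.NatCast in
/-- Key lemma: for every `x ∈ K` and subspace `Q` of corank ≥ N - n there is an element of `K`
whose `ℓ_q` distance to `Q` is at least `c_q (1-n/N)^{1/q} ‖x‖_q`. -/
lemma key {q : ℝ} (hq1 : 1 < q) (hq2 : q ≤ 2) {N : ℕ} [NeZero N] {K : Set (Fin N → ℝ)}
    (hK1 : ∀ x ∈ K, ∀ ε : Fin N → ℝ, (∀ i, ε i = 1 ∨ ε i = -1) → (fun i => ε i * x i) ∈ K)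
    (hK2 : ∀ x ∈ K, (fun i => x (i + 1)) ∈ K)
    {n : ℕ} (hn : n < N) {x : Fin N → ℝ} (hx : x ∈ K)
    (Q : Submodule ℝ (Fin N → ℝ)) (hQ : Module.finrank ℝ Q ≤ n) :
    ∃ u ∈ K, cq q * ((1 - (n:ℝ)/N) ^ (1/q)) * lqN q x ≤ distq q u Q := by
  classical
  -- conjugate exponent bookkeeping
  set p : ℝ := Real.conjExponent q with hp
  have hpq : q.HolderConjugate p := Real.HolderConjugate.conjExponent hq1
  have hq0 : (0:ℝ) < q := lt_trans zero_lt_one hq1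
  have hp1 : 1 < p := hpq.symm.lt
  have hp0 : (0:ℝ) < p := lt_trans zero_lt_one hp1
  have hinv : q⁻¹ + p⁻¹ = 1 := hpq.inv_add_inv_eq_one
  have hp2 : 2 ≤ p := by
    have hq' : (2:ℝ)⁻¹ ≤ q⁻¹ := by
      have := one_div_le_one_div_of_le hq0 hq2
      simpa [one_div] using this
    have hpinv : p⁻¹ ≤ 2⁻¹ := by linarith
    have hpp : p * p⁻¹ = 1 := mul_inv_cancel₀ (ne_of_gt hp0)
    nlinarith
  have hqp_mul : (q - 1) * p = q := hpq.sub_one_mul_conj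
  have hq_inv_eq : 1 - 1/p = 1/q := by
    rw [one_div, one_div]; linarith
  -- the constant pieces
  set Bq : ℝ := (Kc ⌈p⌉₊ : ℝ) with hBq
  have hBq_pos : 0 < Bq := by rw [hBq]; exact_mod_cast Kc_pos ⌈p⌉₊
  set lam : ℝ := 1/(2 * Bq) with hlam
  have hlam_pos : 0 < lam := by positivity
  -- A = ∑ |x i|^q
  set A : ℝ := ∑ i, |x i| ^ q with hA
  have hA_nonneg : 0 ≤ A := Finset.sum_nonneg fun i _ => Real.rpow_nonneg (abs_nonneg _) q
  have hlqN : lqN q x = A ^ (1/q) := rfl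
  rcases eq_or_lt_of_le hA_nonneg with hA0 | hApos
  · -- trivial case ‖x‖_q = 0
    refine ⟨x, hx, ?_⟩
    rw [hlqN, ← hA0, Real.zero_rpow (by positivity : (1:ℝ)/q ≠ 0), mul_zero]
    exact distq_nonneg q x Q
  -- Main case: A > 0
  obtain ⟨r, b, hrank, honb, hperp⟩ := exists_on_family Q
  have hNpos : 0 < N := Nat.pos_of_ne_zero (NeZero.ne N)
  have hrm : N - n ≤ r := by omega
  set m : ℕ := N - n with hm
  have hm1 : 1 ≤ m := by omega
  -- the Gram matrix of the family and its diagonal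
  set Pm : Fin N → Fin N → ℝ := fun i j => ∑ t, b t i * b t j with hPm
  set pd : Fin N → ℝ := fun i => Pm i i with hpd
  have hpd_nonneg : ∀ i, 0 ≤ pd i := fun i =>
    Finset.sum_nonneg fun t _ => mul_self_nonneg _
  have hPsym : ∀ i j, Pm i j = Pm j i := fun i j =>
    Finset.sum_congr rfl fun t _ => mul_comm _ _
  -- row sums of squares equal the diagonal
  have hP2 : ∀ i, ∑ j, (Pm i j)^2 = pd i := by
    intro i
    have expand : ∀ j, (Pm i j)^2 = ∑ t, ∑ u, (b t i * b u i) * (b t j * b u j) := by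
      intro j
      rw [sq]
      show (∑ t, b t i * b t j) * (∑ u, b u i * b u j)
        = ∑ t, ∑ u, (b t i * b u i) * (b t j * b u j)
      rw [Finset.sum_mul_sum]
      exact Finset.sum_congr rfl fun t _ => Finset.sum_congr rfl fun u _ => by ring
    calc ∑ j, (Pm i j)^2 = ∑ j, ∑ t, ∑ u, (b t i * b u i) * (b t j * b u j) :=
          Finset.sum_congr rfl fun j _ => expand j
      _ = ∑ t, ∑ u, (b t i * b u i) * (∑ j, b t j * b u j) := by
          rw [Finset.sum_comm]
          refine Finset.sum_congr rfl fun t _ => ?_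
          rw [Finset.sum_comm]
          refine Finset.sum_congr rfl fun u _ => ?_
          rw [Finset.mul_sum]
      _ = ∑ t, (b t i * b t i) := by
          refine Finset.sum_congr rfl fun t _ => ?_
          have : ∀ u, (b t i * b u i) * (∑ j, b t j * b u j)
              = if t = u then b t i * b u i else 0 := by
            intro u
            rw [honb t u]
            split_ifs with h
            · rw [mul_one]
            · rw [mul_zero]
          rw [Finset.sum_congr rfl fun u _ => this u]
          simp
      _ = pd i := rfl
  have hpd_le_one : ∀ i, pd i ≤ 1 := by
    intro i
    have h1 : (Pm i i)^2 ≤ ∑ j, (Pm i j)^2 := by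
      exact Finset.single_le_sum (f := fun j => (Pm i j)^2) (fun j _ => sq_nonneg _)
        (Finset.mem_univ i)
    rw [hP2 i] at h1
    have h2 := hpd_nonneg i
    nlinarith
  -- trace
  have htr : ∑ i, pd i = (r : ℝ) := by
    calc ∑ i, pd i = ∑ i, ∑ t, b t i * b t i := rfl
      _ = ∑ t, ∑ i, b t i * b t i := Finset.sum_comm
      _ = ∑ t : Fin r, (1:ℝ) := by
          refine Finset.sum_congr rfl fun t _ => ?_
          have := honb t t
          simpa using this
      _ = (r : ℝ) := by simp
  have htrm : (m : ℝ) ≤ ∑ i, pd i := by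
    rw [htr]
    exact_mod_cast hrm
  -- closure of K under arbitrary shifts
  have hshift : ∀ (y : Fin N → ℝ), y ∈ K → ∀ s : Fin N, (fun i => y (i + s)) ∈ K := by
    have hnat : ∀ (j : ℕ) (y : Fin N → ℝ), y ∈ K → (fun i => y (i + (j : Fin N))) ∈ K := by
      intro j
      induction j with
      | zero => intro y hy; simpa using hy
      | succ j ih =>
        intro y hy
        have h2 := ih _ (hK2 y hy)
        have he : (fun i : Fin N => y (i + ((j+1 : ℕ) : Fin N)))
            = (fun i : Fin N => (fun i' => y (i' + 1)) (i + (j : Fin N))) := by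
          funext i
          show y (i + ((j+1 : ℕ) : Fin N)) = y ((i + (j : Fin N)) + 1)
          congr 1
          push_cast
          simp only [Nat.cast_succ, add_assoc]
        rw [he]
        exact h2
    intro y hy s
    have := hnat (s : ℕ) y hy
    simpa [Fin.cast_val_eq_self] using this
  -- |a| * |a|^(q-1) = |a|^q
  have habs_q : ∀ a : ℝ, |a| * |a| ^ (q - 1) = |a| ^ q := by
    intro a
    rcases eq_or_lt_of_le (abs_nonneg a) with h0 | hpos
    · rw [← h0, Real.zero_rpow (by linarith : q - 1 ≠ 0),
        Real.zero_rpow (by linarith : q ≠ 0), mul_zero]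
    · nth_rewrite 1 [← Real.rpow_one |a|]
      rw [← Real.rpow_add hpos]
      norm_num
  -- the random functionals
  set wv : Fin N → ℝ := fun i => |x i| ^ (q - 1) with hwv
  have hwv_nonneg : ∀ i, 0 ≤ wv i := fun i => Real.rpow_nonneg (abs_nonneg _) _
  set Zf : Fin N → (Fin N → Bool) → Fin N → ℝ :=
    fun s ε i => ∑ j, (Pm i j * wv (j + s)) * chi (ε j) with hZf
  set NUM : Fin N → (Fin N → Bool) → ℝ :=
    fun s ε => ∑ i, |x (i + s)| * |Zf s ε i| with hNUMdef
  set DD : Fin N → (Fin N → Bool) → ℝ :=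
    fun s ε => ∑ i, |Zf s ε i| ^ p with hDDdef
  set Mc : ℝ := (Fintype.card (Fin N → Bool) : ℝ) with hMc
  have hMc_pos : 0 < Mc := by rw [hMc]; exact_mod_cast Fintype.card_pos
  have hNUM_nonneg : ∀ s ε, 0 ≤ NUM s ε := fun s ε =>
    Finset.sum_nonneg fun i _ => mul_nonneg (abs_nonneg _) (abs_nonneg _)
  have hDD_nonneg : ∀ s ε, 0 ≤ DD s ε := fun s ε =>
    Finset.sum_nonneg fun i _ => Real.rpow_nonneg (abs_nonneg _) _
  -- numerator bound
  have hNUM : ∀ s : Fin N, Mc * ∑ i, pd i * |x (i + s)| ^ q ≤ ∑ ε : Fin N → Bool, NUM s ε := by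
    intro s
    have h2 : ∀ i, ∑ ε : Fin N → Bool, chi (ε i) * Zf s ε i = Mc * (pd i * wv (i + s)) := by
      intro i
      calc ∑ ε : Fin N → Bool, chi (ε i) * Zf s ε i
          = ∑ ε : Fin N → Bool, ∑ j, (Pm i j * wv (j + s)) * (chi (ε i) * chi (ε j)) := by
            refine Finset.sum_congr rfl fun ε _ => ?_
            show chi (ε i) * ∑ j, (Pm i j * wv (j + s)) * chi (ε j) = _
            rw [Finset.mul_sum]
            exact Finset.sum_congr rfl fun j _ => by ring
        _ = ∑ j, (Pm i j * wv (j + s)) * ∑ ε : Fin N → Bool, chi (ε i) * chi (ε j) := by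
            rw [Finset.sum_comm]
            exact Finset.sum_congr rfl fun j _ => by rw [Finset.mul_sum]
        _ = Mc * (pd i * wv (i + s)) := by
            have hterm : ∀ j, (Pm i j * wv (j + s)) * (∑ ε : Fin N → Bool, chi (ε i) * chi (ε j))
                = if i = j then (Pm i j * wv (j + s)) * Mc else 0 := by
              intro j
              rw [sum_chi_chi i j]
              split_ifs with h
              · rfl
              · rw [mul_zero]
            rw [Finset.sum_congr rfl fun j _ => hterm j, Finset.sum_ite_eq]
            simp only [Finset.mem_univ, if_true]
            ring
    calc Mc * ∑ i, pd i * |x (i + s)| ^ q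
        = ∑ i, |x (i + s)| * (Mc * (pd i * wv (i + s))) := by
          rw [Finset.mul_sum]
          refine Finset.sum_congr rfl fun i _ => ?_
          rw [← habs_q (x (i + s))]
          show Mc * (pd i * (|x (i+s)| * wv (i+s))) = |x (i + s)| * (Mc * (pd i * wv (i + s)))
          ring
      _ = ∑ i, |x (i + s)| * ∑ ε : Fin N → Bool, chi (ε i) * Zf s ε i := by
          refine Finset.sum_congr rfl fun i _ => by rw [h2 i]
      _ = ∑ ε : Fin N → Bool, ∑ i, |x (i + s)| * (chi (ε i) * Zf s ε i) := by
          rw [Finset.sum_comm]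
          exact Finset.sum_congr rfl fun i _ => by rw [Finset.mul_sum]
      _ ≤ ∑ ε : Fin N → Bool, NUM s ε := by
          refine Finset.sum_le_sum fun ε _ => ?_
          refine Finset.sum_le_sum fun i _ => ?_
          exact mul_le_mul_of_nonneg_left (chi_mul_le_abs _ _) (abs_nonneg _)
  -- denominator bound
  have hDD : ∀ s : Fin N, ∑ ε : Fin N → Bool, DD s ε ≤ Bq * Mc * ∑ j, pd j * |x (j + s)| ^ q := by
    intro s
    -- (wv a)^2 raised to p/2 equals |x a|^q
    have hw2p : ∀ a : Fin N, ((wv a)^2) ^ (p/2) = |x a| ^ q := by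
      intro a
      have h1 : (wv a)^2 = |x a| ^ ((q-1)*2) := by
        show (|x a| ^ (q-1))^2 = _
        rw [← Real.rpow_natCast (|x a| ^ (q-1)) 2, ← Real.rpow_mul (abs_nonneg _)]
        norm_num
      rw [h1, ← Real.rpow_mul (abs_nonneg _)]
      congr 1
      have : (q-1) * 2 * (p/2) = (q-1) * p := by ring
      rw [this, hqp_mul]
    have hp2' : 1 ≤ p/2 := by linarith
    have hkin : ∀ i, ∑ ε : Fin N → Bool, |Zf s ε i| ^ p
        ≤ Bq * Mc * (∑ j, ((Pm i j * wv (j + s)))^2) ^ (p/2) := by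
      intro i
      have := khintchine_rpow hp2 (fun j => Pm i j * wv (j + s))
      exact this
    have hjen : ∀ i, (∑ j, ((Pm i j * wv (j + s)))^2) ^ (p/2)
        ≤ ∑ j, (Pm i j)^2 * |x (j + s)| ^ q := by
      intro i
      have hexp : ∀ j, ((Pm i j * wv (j + s)))^2 = (Pm i j)^2 * ((wv (j + s))^2) := by
        intro j; ring
      rw [Finset.sum_congr rfl fun j _ => hexp j]
      calc (∑ j, (Pm i j)^2 * ((wv (j + s))^2)) ^ (p/2)
          ≤ ∑ j, (Pm i j)^2 * (((wv (j + s))^2) ^ (p/2)) := by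
            refine jensen_aux _ _ (fun j => sq_nonneg _) ?_ (fun j => sq_nonneg _) hp2'
            rw [hP2 i]
            exact hpd_le_one i
        _ = ∑ j, (Pm i j)^2 * |x (j + s)| ^ q :=
            Finset.sum_congr rfl fun j _ => by rw [hw2p]
    calc ∑ ε : Fin N → Bool, DD s ε = ∑ i, ∑ ε : Fin N → Bool, |Zf s ε i| ^ p :=
          Finset.sum_comm
      _ ≤ ∑ i, Bq * Mc * (∑ j, ((Pm i j * wv (j + s)))^2) ^ (p/2) :=
          Finset.sum_le_sum fun i _ => hkin i
      _ ≤ ∑ i, Bq * Mc * ∑ j, (Pm i j)^2 * |x (j + s)| ^ q := by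
          refine Finset.sum_le_sum fun i _ => ?_
          exact mul_le_mul_of_nonneg_left (hjen i) (by positivity)
      _ = Bq * Mc * ∑ j, pd j * |x (j + s)| ^ q := by
          rw [← Finset.mul_sum]
          congr 1
          rw [Finset.sum_comm]
          refine Finset.sum_congr rfl fun j _ => ?_
          rw [← Finset.sum_mul]
          congr 1
          calc ∑ i, (Pm i j)^2 = ∑ i, (Pm j i)^2 :=
                Finset.sum_congr rfl fun i _ => by rw [hPsym]
            _ = pd j := hP2 j
  -- shift averaging
  have hshift_sum : ∀ i : Fin N, ∑ s : Fin N, |x (i + s)| ^ q = A := by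
    intro i
    exact Equiv.sum_comp (Equiv.addLeft i) (fun v => |x v| ^ q)
  have hswap : ∑ s : Fin N, ∑ i, pd i * |x (i + s)| ^ q = (∑ i, pd i) * A := by
    rw [Finset.sum_comm]
    calc ∑ i, ∑ s : Fin N, pd i * |x (i + s)| ^ q = ∑ i, pd i * A := by
          refine Finset.sum_congr rfl fun i _ => ?_
          rw [← Finset.mul_sum, hshift_sum i]
      _ = (∑ i, pd i) * A := by rw [Finset.sum_mul]
  have htotal_num : Mc * ((∑ i, pd i) * A) ≤ ∑ s : Fin N, ∑ ε : Fin N → Bool, NUM s ε := by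
    calc Mc * ((∑ i, pd i) * A) = ∑ s : Fin N, Mc * ∑ i, pd i * |x (i + s)| ^ q := by
          rw [← Finset.mul_sum, hswap]
      _ ≤ ∑ s : Fin N, ∑ ε : Fin N → Bool, NUM s ε :=
          Finset.sum_le_sum fun s _ => hNUM s
  have htotal_den : ∑ s : Fin N, ∑ ε : Fin N → Bool, DD s ε ≤ Bq * Mc * ((∑ i, pd i) * A) := by
    calc ∑ s : Fin N, ∑ ε : Fin N → Bool, DD s ε
        ≤ ∑ s : Fin N, Bq * Mc * ∑ j, pd j * |x (j + s)| ^ q :=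
          Finset.sum_le_sum fun s _ => hDD s
      _ = Bq * Mc * ((∑ i, pd i) * A) := by
          rw [← Finset.mul_sum, hswap]
  -- pigeonhole over (s, ε)
  haveI hne : Nonempty (Fin N) := ⟨⟨0, hNpos⟩⟩
  have hNr_pos : (0:ℝ) < (N:ℝ) := by exact_mod_cast hNpos
  have hm_pos : (0:ℝ) < (m:ℝ) := by exact_mod_cast hm1
  have hsum_F : Mc * ((m:ℝ) * A) / 2
      ≤ ∑ s : Fin N, ∑ ε : Fin N → Bool, (NUM s ε - lam * DD s ε) := by
    have h1 : ∑ s : Fin N, ∑ ε : Fin N → Bool, (NUM s ε - lam * DD s ε)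
        = (∑ s : Fin N, ∑ ε : Fin N → Bool, NUM s ε)
          - lam * (∑ s : Fin N, ∑ ε : Fin N → Bool, DD s ε) := by
      rw [Finset.mul_sum, ← Finset.sum_sub_distrib]
      refine Finset.sum_congr rfl fun s _ => ?_
      rw [Finset.mul_sum, ← Finset.sum_sub_distrib]
    rw [h1]
    have h2 : lam * (∑ s : Fin N, ∑ ε : Fin N → Bool, DD s ε)
        ≤ lam * (Bq * Mc * ((∑ i, pd i) * A)) :=
      mul_le_mul_of_nonneg_left htotal_den hlam_pos.le
    have h3 : lam * (Bq * Mc * ((∑ i, pd i) * A)) = Mc * ((∑ i, pd i) * A) / 2 := by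
      rw [hlam]
      field_simp
    have h4 : Mc * ((m:ℝ) * A) / 2 ≤ Mc * ((∑ i, pd i) * A) / 2 := by
      have : (m:ℝ) * A ≤ (∑ i, pd i) * A :=
        mul_le_mul_of_nonneg_right htrm hA_nonneg
      nlinarith [hMc_pos]
    have h5 := htotal_num
    nlinarith [h2, h3, h4, h5]
  have hexists : ∃ (z : Fin N × (Fin N → Bool)),
      (m : ℝ) * A / (2 * N) ≤ NUM z.1 z.2 - lam * DD z.1 z.2 := by
    by_contra hcon
    push_neg at hcon
    have hlt : ∑ s : Fin N, ∑ ε : Fin N → Bool, (NUM s ε - lam * DD s ε)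
        < ∑ s : Fin N, ∑ ε : Fin N → Bool, ((m : ℝ) * A / (2 * N)) := by
      refine Finset.sum_lt_sum_of_nonempty Finset.univ_nonempty fun s _ => ?_
      exact Finset.sum_lt_sum_of_nonempty Finset.univ_nonempty fun ε _ => hcon (s, ε)
    have hconst : ∑ s : Fin N, ∑ ε : Fin N → Bool, ((m : ℝ) * A / (2 * N))
        = Mc * ((m:ℝ) * A) / 2 := by
      rw [Finset.sum_const, Finset.sum_const, Finset.card_univ, Finset.card_univ,
        nsmul_eq_mul, nsmul_eq_mul, Fintype.card_fin]
      rw [hMc]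
      field_simp
    rw [hconst] at hlt
    linarith [hsum_F]
  obtain ⟨⟨s, ε⟩, hgood⟩ := hexists
  simp only at hgood
  -- properties at the sample
  have hmAN_pos : (0:ℝ) < (m:ℝ) * A / (2 * N) := by positivity
  have hNUMge : (m:ℝ) * A / (2 * N) ≤ NUM s ε := by
    have := mul_nonneg hlam_pos.le (hDD_nonneg s ε)
    linarith
  have hNUMpos : 0 < NUM s ε := lt_of_lt_of_le hmAN_pos hNUMge
  have hlamDD : lam * DD s ε ≤ NUM s ε := by linarith
  have hDDpos : 0 < DD s ε := by
    rcases eq_or_lt_of_le (hDD_nonneg s ε) with h0 | h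
    · exfalso
      have hall : ∀ i ∈ Finset.univ, |Zf s ε i| ^ p = 0 :=
        (Finset.sum_eq_zero_iff_of_nonneg fun i _ => Real.rpow_nonneg (abs_nonneg _) _).mp h0.symm
      have hz : ∀ i, Zf s ε i = 0 := by
        intro i
        have h1 := hall i (Finset.mem_univ i)
        by_contra hne'
        have hpos : 0 < |Zf s ε i| := abs_pos.mpr hne'
        exact absurd h1 (ne_of_gt (Real.rpow_pos_of_pos hpos p))
      have hNUM0 : NUM s ε = 0 :=
        Finset.sum_eq_zero fun i _ => by rw [hz i, abs_zero, mul_zero]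
      linarith
    · exact h
  set Dv : ℝ := (DD s ε) ^ ((1:ℝ)/p) with hDv
  have hDv_pos : 0 < Dv := Real.rpow_pos_of_pos hDDpos _
  -- the element u of K
  set xs : Fin N → ℝ := fun i => x (i + s) with hxs
  have hxsK : xs ∈ K := hshift x hx s
  set sg : Fin N → ℝ := fun i => if xs i * Zf s ε i < 0 then -1 else 1 with hsg
  have hsg_pm : ∀ i, sg i = 1 ∨ sg i = -1 := by
    intro i
    by_cases h : xs i * Zf s ε i < 0
    · right; simp [hsg, h]
    · left; simp [hsg, h]
  set u : Fin N → ℝ := fun i => sg i * xs i with hu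
  have huK : u ∈ K := hK1 xs hxsK sg hsg_pm
  have hug : ∀ i, u i * Zf s ε i = |x (i + s)| * |Zf s ε i| := by
    intro i
    have : u i * Zf s ε i = sg i * (xs i * Zf s ε i) := by rw [hu]; ring
    rw [this, ← abs_mul]
    rcases lt_or_ge (xs i * Zf s ε i) 0 with h | h
    · rw [hsg]
      simp only [if_pos h]
      rw [abs_of_neg h]
      ring
    · rw [hsg]
      simp only [if_neg (not_lt.mpr h)]
      rw [abs_of_nonneg h]
      ring
  -- f := Zf s ε annihilates Q
  have hZf_perp : ∀ z ∈ Q, ∑ i, z i * Zf s ε i = 0 := by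
    intro z hz
    have hβ : ∀ i, Zf s ε i = ∑ t, (∑ j, (b t j * wv (j + s)) * chi (ε j)) * b t i := by
      intro i
      show ∑ j, (Pm i j * wv (j + s)) * chi (ε j) = _
      calc ∑ j, (Pm i j * wv (j + s)) * chi (ε j)
          = ∑ j, ∑ t, ((b t j * wv (j + s)) * chi (ε j)) * b t i := by
            refine Finset.sum_congr rfl fun j _ => ?_
            show ((∑ t, b t i * b t j) * wv (j + s)) * chi (ε j) = _
            rw [Finset.sum_mul, Finset.sum_mul]
            exact Finset.sum_congr rfl fun t _ => by ring
        _ = ∑ t, (∑ j, (b t j * wv (j + s)) * chi (ε j)) * b t i := by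
            rw [Finset.sum_comm]
            exact Finset.sum_congr rfl fun t _ => by rw [Finset.sum_mul]
    calc ∑ i, z i * Zf s ε i
        = ∑ i, ∑ t, (∑ j, (b t j * wv (j + s)) * chi (ε j)) * (z i * b t i) := by
          refine Finset.sum_congr rfl fun i _ => ?_
          rw [hβ i, Finset.mul_sum]
          exact Finset.sum_congr rfl fun t _ => by ring
      _ = ∑ t, (∑ j, (b t j * wv (j + s)) * chi (ε j)) * (∑ i, z i * b t i) := by
          rw [Finset.sum_comm]
          exact Finset.sum_congr rfl fun t _ => by rw [Finset.mul_sum]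
      _ = 0 := by
          refine Finset.sum_eq_zero fun t _ => ?_
          rw [hperp z hz t, mul_zero]
  -- duality
  have hdual : NUM s ε / Dv ≤ distq q u Q := by
    haveI : Nonempty Q := ⟨0⟩
    refine le_ciInf fun y => ?_
    have hH := Real.inner_le_Lp_mul_Lq (Finset.univ) (fun i => u i - (y : Fin N → ℝ) i)
      (fun i => Zf s ε i) hpq
    have hpair : ∑ i, (u i - (y : Fin N → ℝ) i) * Zf s ε i = NUM s ε := by
      have hexp : ∀ i, (u i - (y : Fin N → ℝ) i) * Zf s ε i
          = u i * Zf s ε i - (y : Fin N → ℝ) i * Zf s ε i := fun i => by ring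
      rw [Finset.sum_congr rfl fun i _ => hexp i, Finset.sum_sub_distrib,
        hZf_perp (y : Fin N → ℝ) y.2, sub_zero]
      exact Finset.sum_congr rfl fun i _ => hug i
    rw [hpair] at hH
    rw [div_le_iff₀ hDv_pos]
    exact hH
  -- numeric endgame
  have hDD_le : DD s ε ≤ NUM s ε / lam := by
    rw [le_div_iff₀ hlam_pos]
    linarith
  have hDv_le : Dv ≤ (NUM s ε / lam) ^ ((1:ℝ)/p) :=
    Real.rpow_le_rpow (hDD_nonneg s ε) hDD_le (by positivity)
  have hchain : lam ^ ((1:ℝ)/p) * (NUM s ε) ^ ((1:ℝ)/q) ≤ NUM s ε / Dv := by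
    have hbig_pos : 0 < (NUM s ε / lam) ^ ((1:ℝ)/p) :=
      Real.rpow_pos_of_pos (by positivity) _
    have h1 : NUM s ε / (NUM s ε / lam) ^ ((1:ℝ)/p) ≤ NUM s ε / Dv := by
      have := one_div_le_one_div_of_le hDv_pos hDv_le
      calc NUM s ε / (NUM s ε / lam) ^ ((1:ℝ)/p)
          = NUM s ε * (1 / (NUM s ε / lam) ^ ((1:ℝ)/p)) := by ring
        _ ≤ NUM s ε * (1 / Dv) := mul_le_mul_of_nonneg_left this hNUMpos.le
        _ = NUM s ε / Dv := by ring
    have h2 : NUM s ε / (NUM s ε / lam) ^ ((1:ℝ)/p)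
        = lam ^ ((1:ℝ)/p) * (NUM s ε) ^ ((1:ℝ)/q) := by
      rw [Real.div_rpow hNUMpos.le hlam_pos.le]
      have h3 : NUM s ε = (NUM s ε) ^ ((1:ℝ)/p) * (NUM s ε) ^ ((1:ℝ)/q) := by
        rw [← Real.rpow_add hNUMpos]
        have : (1:ℝ)/p + 1/q = 1 := by
          rw [one_div, one_div]; linarith
        rw [this, Real.rpow_one]
      have hNp_pos : 0 < (NUM s ε) ^ ((1:ℝ)/p) := Real.rpow_pos_of_pos hNUMpos _
      rw [div_div_eq_mul_div]
      rw [mul_comm (NUM s ε) (lam ^ ((1:ℝ)/p)), mul_div_assoc]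
      congr 1
      nth_rewrite 1 [h3]
      rw [mul_comm, mul_div_assoc, div_self (ne_of_gt hNp_pos), mul_one]
    linarith [h1, h2.symm.le]
  -- final assembly
  refine ⟨u, huK, ?_⟩
  have hstep1 : lam ^ ((1:ℝ)/p) * ((m:ℝ) * A / (2 * N)) ^ ((1:ℝ)/q) ≤ distq q u Q := by
    have hr1 : ((m:ℝ) * A / (2 * N)) ^ ((1:ℝ)/q) ≤ (NUM s ε) ^ ((1:ℝ)/q) :=
      Real.rpow_le_rpow hmAN_pos.le hNUMge (by positivity)
    have hr2 : lam ^ ((1:ℝ)/p) * ((m:ℝ) * A / (2 * N)) ^ ((1:ℝ)/q)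
        ≤ lam ^ ((1:ℝ)/p) * (NUM s ε) ^ ((1:ℝ)/q) :=
      mul_le_mul_of_nonneg_left hr1 (Real.rpow_nonneg hlam_pos.le _)
    calc lam ^ ((1:ℝ)/p) * ((m:ℝ) * A / (2 * N)) ^ ((1:ℝ)/q)
        ≤ lam ^ ((1:ℝ)/p) * (NUM s ε) ^ ((1:ℝ)/q) := hr2
      _ ≤ NUM s ε / Dv := hchain
      _ ≤ distq q u Q := hdual
  -- rewrite the left side into the target form
  have hsplit : ((m:ℝ) * A / (2 * N)) ^ ((1:ℝ)/q)
      = (1 - (n:ℝ)/N) ^ ((1:ℝ)/q) * A ^ ((1:ℝ)/q) * ((1:ℝ)/2) ^ ((1:ℝ)/q) := by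
    have hmN : (m:ℝ) * A / (2 * N) = (1 - (n:ℝ)/N) * A * ((1:ℝ)/2) := by
      have hmcast : (m:ℝ) = (N:ℝ) - (n:ℝ) := by
        rw [hm]
        push_cast [Nat.cast_sub hn.le]
        ring
      have h1 : 1 - (n:ℝ)/N = ((N:ℝ) - n)/N := by
        rw [sub_div, div_self (ne_of_gt hNr_pos)]
      rw [hmcast, h1]
      ring
    rw [hmN]
    have ht_nonneg : (0:ℝ) ≤ 1 - (n:ℝ)/N := by
      have : (n:ℝ)/N ≤ 1 := by
        rw [div_le_one hNr_pos]
        exact_mod_cast hn.le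
      linarith
    rw [Real.mul_rpow (mul_nonneg ht_nonneg hA_nonneg) (by norm_num : (0:ℝ) ≤ 1/2),
      Real.mul_rpow ht_nonneg hA_nonneg]
  have hcq_eq : cq q = lam ^ ((1:ℝ)/p) * ((1:ℝ)/2) ^ ((1:ℝ)/q) := by
    rw [cq, hlam, hBq, hp]
  rw [hlqN, hcq_eq]
  calc lam ^ ((1:ℝ)/p) * ((1:ℝ)/2) ^ ((1:ℝ)/q) * (1 - (n:ℝ)/N) ^ ((1:ℝ)/q) * A ^ ((1:ℝ)/q)
      = lam ^ ((1:ℝ)/p) * ((1 - (n:ℝ)/N) ^ ((1:ℝ)/q) * A ^ ((1:ℝ)/q) * ((1:ℝ)/2) ^ ((1:ℝ)/q)) := by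
        ring
    _ = lam ^ ((1:ℝ)/p) * ((m:ℝ) * A / (2 * N)) ^ ((1:ℝ)/q) := by rw [hsplit]
    _ ≤ distq q u Q := hstep1






lemma distq_le_lqN {N : ℕ} (q : ℝ) (v : Fin N → ℝ) (Q : Submodule ℝ (Fin N → ℝ)) :
    distq q v Q ≤ lqN q v := by
  have hbb : BddBelow (Set.range fun y : Q => lqN q (fun i => v i - (y : Fin N → ℝ) i)) := by
    refine ⟨0, ?_⟩
    rintro z ⟨y, rfl⟩
    exact lqN_nonneg q _
  have h := ciInf_le hbb (⟨0, Q.zero_mem⟩ : Q)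
  simpa [distq] using h

end Stmt14Aux

/-- If `K ⊆ ℝ^N` is unconditional and invariant under cyclic shifts of coordinates and
`1 < q ≤ 2`, then `d_n(K, ℓ_q^N) ≥ c_q (1 - n/N)^{1/q} sup_{x ∈ K} ‖x‖_q` where
`c_q > 0` depends only on `q`. -/
theorem stmt14 (q : ℝ) (hq1 : 1 < q) (hq2 : q ≤ 2) :
    ∃ c > 0, ∀ (N : ℕ) (_ : NeZero N) (K : Set (Fin N → ℝ)),
      (∀ x ∈ K, ∀ ε : Fin N → ℝ, (∀ i, ε i = 1 ∨ ε i = -1) →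
        (fun i => ε i * x i) ∈ K) →
      (∀ x ∈ K, (fun i => x (i + 1)) ∈ K) →
      ∀ n, n < N →
      dKol n q K ≥ c * (1 - (n : ℝ) / N) ^ (1/q) * ⨆ x : K, lqN q x.1 := by
  classical
  refine ⟨Stmt14Aux.cq q, Stmt14Aux.cq_pos q, ?_⟩
  intro N hNZ K hK1 hK2 n hn
  haveI := hNZ
  rw [ge_iff_le]
  have hNpos : 0 < N := Nat.pos_of_ne_zero (NeZero.ne N)
  have hNr_pos : (0:ℝ) < (N:ℝ) := by exact_mod_cast hNpos
  have ht_pos : (0:ℝ) < 1 - (n:ℝ)/N := by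
    have h1 : (n:ℝ) < (N:ℝ) := by exact_mod_cast hn
    have h2 : (n:ℝ)/N < 1 := (div_lt_one hNr_pos).mpr h1
    linarith
  have hc_pos : 0 < Stmt14Aux.cq q * (1 - (n:ℝ)/N) ^ (1/q) :=
    mul_pos (Stmt14Aux.cq_pos q) (Real.rpow_pos_of_pos ht_pos _)
  unfold dKol
  have hQex : Nonempty {Q : Submodule ℝ (Fin N → ℝ) // Module.finrank ℝ Q ≤ n} :=
    ⟨⟨⊥, by simp⟩⟩
  refine le_ciInf fun Qs => ?_
  obtain ⟨Q, hQ⟩ := Qs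
  by_cases hKe : Nonempty ↥K
  swap
  · -- K is empty : both suprema are 0
    haveI : IsEmpty ↥K := not_nonempty_iff.mp hKe
    rw [Real.iSup_of_isEmpty, Real.iSup_of_isEmpty, mul_zero]
  · by_cases hbdd : BddAbove (Set.range fun x : ↥K => distq q x.1 Q)
    · -- main case
      have hub : ∀ x : ↥K,
          Stmt14Aux.cq q * (1 - (n:ℝ)/N) ^ (1/q) * lqN q x.1
            ≤ ⨆ y : ↥K, distq q y.1 Q := by
        intro x
        obtain ⟨u, huK, hle⟩ := Stmt14Aux.key hq1 hq2 hK1 hK2 hn x.2 Q hQ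
        exact le_trans hle (le_ciSup hbdd (⟨u, huK⟩ : ↥K))
      have hsup_nonneg : 0 ≤ ⨆ y : ↥K, distq q y.1 Q := by
        obtain ⟨x0⟩ := hKe
        exact le_trans (Stmt14Aux.distq_nonneg q x0.1 Q) (le_ciSup hbdd x0)
      have hSle : (⨆ x : ↥K, lqN q x.1)
          ≤ (⨆ y : ↥K, distq q y.1 Q) / (Stmt14Aux.cq q * (1 - (n:ℝ)/N) ^ (1/q)) := by
        refine Real.iSup_le (fun x => ?_) (div_nonneg hsup_nonneg hc_pos.le)
        rw [le_div_iff₀ hc_pos]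
        calc lqN q x.1 * (Stmt14Aux.cq q * (1 - (n:ℝ)/N) ^ (1/q))
            = Stmt14Aux.cq q * (1 - (n:ℝ)/N) ^ (1/q) * lqN q x.1 := by ring
          _ ≤ ⨆ y : ↥K, distq q y.1 Q := hub x
      calc Stmt14Aux.cq q * (1 - (n:ℝ)/N) ^ (1/q) * ⨆ x : ↥K, lqN q x.1
          ≤ Stmt14Aux.cq q * (1 - (n:ℝ)/N) ^ (1/q)
            * ((⨆ y : ↥K, distq q y.1 Q) / (Stmt14Aux.cq q * (1 - (n:ℝ)/N) ^ (1/q))) :=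
            mul_le_mul_of_nonneg_left hSle hc_pos.le
        _ = ⨆ y : ↥K, distq q y.1 Q := by
            rw [mul_comm]
            exact div_mul_cancel₀ _ (ne_of_gt hc_pos)
    · -- the distance supremum is "unbounded": both sides degenerate
      have hSup0 : (⨆ x : ↥K, distq q x.1 Q) = 0 := Real.iSup_of_not_bddAbove hbdd
      have hbdd2 : ¬ BddAbove (Set.range fun x : ↥K => lqN q x.1) := by
        intro hb
        obtain ⟨M, hM⟩ := hb
        apply hbdd
        refine ⟨M, ?_⟩
        rintro z ⟨x, rfl⟩
        exact le_trans (Stmt14Aux.distq_le_lqN q x.1 Q) (hM (Set.mem_range_self x))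
      have hS0 : (⨆ x : ↥K, lqN q x.1) = 0 := Real.iSup_of_not_bddAbove hbdd2
      rw [hSup0, hS0, mul_zero]
end

section
/- Let H ≤ S_N act transitively on {1,…,N}, and let K ⊆ ℝ^N be unconditional and invariant under the permutation action of H on coordinates. Then for 1 < q ≤ 2 and any ε ∈ (0,1), d_n(K, ℓ_q^N) ≥ c(q,ε) sup_{x∈K} ‖x‖_q whenever n ≤ N(1 − ε). -/
open MeasureTheory

namespace Stmt15Aux

lemma lqN_nonneg {N : ℕ} (q : ℝ) (x : Fin N → ℝ) : 0 ≤ lqN q x := by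
  unfold lqN
  positivity

lemma distq_nonneg {N : ℕ} (q : ℝ) (x : Fin N → ℝ) (Q : Submodule ℝ (Fin N → ℝ)) :
    0 ≤ distq q x Q := by
  unfold distq
  exact le_ciInf fun y => lqN_nonneg q _

lemma distq_le_lqN {N : ℕ} (q : ℝ) (x : Fin N → ℝ) (Q : Submodule ℝ (Fin N → ℝ)) :
    distq q x Q ≤ lqN q x := by
  unfold distq
  have h0 : BddBelow (Set.range fun y : Q => lqN q (fun i => x i - (y : Fin N → ℝ) i)) := by
    refine ⟨0, ?_⟩
    rintro _ ⟨y, rfl⟩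
    exact lqN_nonneg q _
  calc (⨅ y : Q, lqN q (fun i => x i - (y : Fin N → ℝ) i))
      ≤ lqN q (fun i => x i - ((0 : Q) : Fin N → ℝ) i) := ciInf_le h0 0
    _ = lqN q x := by
        congr 1
        funext i
        simp

noncomputable def sg (b : Bool) : ℝ := if b then 1 else -1

@[simp] lemma sg_mul_self (b : Bool) : sg b * sg b = 1 := by cases b <;> simp [sg]

@[simp] lemma sg_not (b : Bool) : sg (!b) = - sg b := by cases b <;> simp [sg]

lemma abs_sg (b : Bool) : |sg b| = 1 := by cases b <;> simp [sg]

variable {N : ℕ}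

lemma card_cube (N : ℕ) : (Fintype.card (Fin N → Bool)) = 2 ^ N := by
  simp [Fintype.card_fun]

lemma sum_sg_mul_eq_zero {j k : Fin N} (h : j ≠ k) :
    ∑ g : Fin N → Bool, sg (g j) * sg (g k) = 0 := by
  classical
  apply Finset.sum_ninvolution (fun g => Function.update g j (!g j))
  · intro g
    rw [Function.update_self, Function.update_of_ne (Ne.symm h), sg_not]
    ring
  · intro g hg
    intro hcon
    have := congrFun hcon j
    simp [Function.update_apply] at this
  · intro g; exact Finset.mem_univ _
  · intro g
    funext l
    by_cases hl : l = j
    · subst hl; simp [Function.update_apply]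
    · simp [Function.update_apply, hl]

lemma sum_X_sq (v : Fin N → ℝ) :
    ∑ g : Fin N → Bool, (∑ j, v j * sg (g j)) ^ 2 = 2 ^ N * ∑ j, v j ^ 2 := by
  classical
  have : ∀ g : Fin N → Bool, (∑ j, v j * sg (g j)) ^ 2
      = ∑ j, ∑ k, (v j * v k) * (sg (g j) * sg (g k)) := by
    intro g
    rw [sq, Finset.sum_mul_sum]
    apply Finset.sum_congr rfl; intro j _
    apply Finset.sum_congr rfl; intro k _
    ring
  rw [Finset.sum_congr rfl fun g _ => this g]
  rw [Finset.sum_comm]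
  have : ∀ j : Fin N, ∑ g : Fin N → Bool, ∑ k, (v j * v k) * (sg (g j) * sg (g k))
      = 2 ^ N * v j ^ 2 := by
    intro j
    rw [Finset.sum_comm]
    have hterm : ∀ k : Fin N, ∑ g : Fin N → Bool, (v j * v k) * (sg (g j) * sg (g k))
        = if k = j then 2 ^ N * v j ^ 2 else 0 := by
      intro k
      rw [← Finset.mul_sum]
      by_cases hk : k = j
      · subst hk
        simp [Finset.sum_const, card_cube]
        ring
      · rw [sum_sg_mul_eq_zero (Ne.symm hk), mul_zero, if_neg hk]
    rw [Finset.sum_congr rfl fun k _ => hterm k]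
    simp
  rw [Finset.sum_congr rfl fun j _ => this j, ← Finset.mul_sum]

lemma sum_exp_le (v : Fin N → ℝ) (t : ℝ) :
    ∑ g : Fin N → Bool, Real.exp (t * ∑ j, v j * sg (g j))
      ≤ 2 ^ N * Real.exp (t ^ 2 * (∑ j, v j ^ 2) / 2) := by
  classical
  have hexp : ∀ g : Fin N → Bool, Real.exp (t * ∑ j, v j * sg (g j))
      = ∏ j, Real.exp (t * (v j * sg (g j))) := by
    intro g
    rw [← Real.exp_sum, ← Finset.mul_sum]
  calc ∑ g : Fin N → Bool, Real.exp (t * ∑ j, v j * sg (g j))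
      = ∑ g : Fin N → Bool, ∏ j, (fun (j : Fin N) (b : Bool) => Real.exp (t * (v j * sg b))) j (g j) := by
        exact Finset.sum_congr rfl fun g _ => hexp g
    _ = ∏ j, ∑ b : Bool, Real.exp (t * (v j * sg b)) := (Fintype.prod_sum (κ := fun _ : Fin N => Bool) (fun j b => Real.exp (t * (v j * sg b)))).symm
    _ = ∏ j, (Real.exp (t * v j) + Real.exp (-(t * v j))) := by
        apply Finset.prod_congr rfl; intro j _
        rw [Fintype.sum_bool]
        simp [sg]
    _ ≤ ∏ j, 2 * Real.exp ((t * v j) ^ 2 / 2) := by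
        apply Finset.prod_le_prod
        · intro j _; positivity
        · intro j _
          have := Real.cosh_le_exp_half_sq (t * v j)
          rw [Real.cosh_eq] at this
          linarith
    _ = 2 ^ N * Real.exp (t ^ 2 * (∑ j, v j ^ 2) / 2) := by
        rw [Finset.prod_mul_distrib, Finset.prod_const, ← Real.exp_sum]
        simp [Finset.card_univ]
        rw [Finset.mul_sum, ← Finset.sum_div]
        congr 1
        apply Finset.sum_congr rfl; intro j _
        ring

lemma rpow_le_exp_aux {u r : ℝ} (hu : 0 ≤ u) (hr : 0 < r) :
    u ^ r ≤ r ^ r * Real.exp (u - r) := by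
  rcases eq_or_lt_of_le hu with h | h
  · rw [← h, Real.zero_rpow hr.ne']
    positivity
  · have hdiv : 0 < u / r := div_pos h hr
    have hlog : Real.log (u / r) ≤ u / r - 1 := Real.log_le_sub_one_of_pos hdiv
    have h1 : (u / r) ^ r ≤ Real.exp (u - r) := by
      rw [Real.rpow_def_of_pos hdiv]
      apply Real.exp_le_exp.2
      calc Real.log (u / r) * r ≤ (u / r - 1) * r := by
            apply mul_le_mul_of_nonneg_right hlog hr.le
        _ = u - r := by field_simp
    have : u ^ r = r ^ r * (u / r) ^ r := by
      rw [← Real.mul_rpow hr.le hdiv.le]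
      congr 1
      field_simp
    rw [this]
    exact mul_le_mul_of_nonneg_left h1 (by positivity)

lemma abs_rpow_le {r lam : ℝ} (t : ℝ) (hr : 0 < r) (hl : 0 < lam) :
    |t| ^ r ≤ (r / lam) ^ r * Real.exp (-r) *
      (Real.exp (lam * t) + Real.exp (-(lam * t))) := by
  have h1 : (lam * |t|) ^ r ≤ r ^ r * Real.exp (lam * |t| - r) :=
    rpow_le_exp_aux (by positivity) hr
  have h2 : |t| ^ r = (lam * |t|) ^ r / lam ^ r := by
    rw [Real.mul_rpow hl.le (abs_nonneg t), mul_comm, mul_div_assoc,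
      div_self (by positivity : (lam:ℝ) ^ r ≠ 0), mul_one]
  have h3 : Real.exp (lam * |t|) ≤ Real.exp (lam * t) + Real.exp (-(lam * t)) := by
    rcases abs_cases t with ⟨he, _⟩ | ⟨he, _⟩
    · rw [he]
      nlinarith [Real.exp_pos (-(lam * t))]
    · rw [he, mul_neg, ← neg_mul]
      nlinarith [Real.exp_pos (lam * t)]
  calc |t| ^ r = (lam * |t|) ^ r / lam ^ r := h2
    _ ≤ r ^ r * Real.exp (lam * |t| - r) / lam ^ r := by
        apply div_le_div_of_nonneg_right h1 (by positivity)
    _ = (r / lam) ^ r * Real.exp (-r) * Real.exp (lam * |t|) := by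
        rw [Real.div_rpow hr.le hl.le, Real.exp_sub, Real.exp_neg]
        field_simp
    _ ≤ (r / lam) ^ r * Real.exp (-r) * (Real.exp (lam * t) + Real.exp (-(lam * t))) := by
        apply mul_le_mul_of_nonneg_left h3 (by positivity)

lemma khintchine_upper (v : Fin N → ℝ) {r : ℝ} (hr : 0 < r) :
    ∑ g : Fin N → Bool, |∑ j, v j * sg (g j)| ^ r
      ≤ 2 ^ N * (2 * r ^ (r / 2)) * (∑ j, v j ^ 2) ^ (r / 2) := by
  classical
  set S2 := ∑ j, v j ^ 2 with hS2
  have hS2nn : 0 ≤ S2 := Finset.sum_nonneg fun j _ => sq_nonneg _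
  rcases eq_or_lt_of_le hS2nn with h0 | hpos
  · -- all v j = 0
    have hv : ∀ j, v j = 0 := by
      intro j
      have := (Finset.sum_eq_zero_iff_of_nonneg (fun i _ => sq_nonneg (v i))).1 h0.symm j
        (Finset.mem_univ j)
      exact pow_eq_zero_iff (by norm_num) |>.1 this
    have : ∀ g : Fin N → Bool, |∑ j, v j * sg (g j)| ^ r = 0 := by
      intro g
      have : (∑ j, v j * sg (g j)) = 0 := Finset.sum_eq_zero fun j _ => by rw [hv j, zero_mul]
      rw [this, abs_zero, Real.zero_rpow hr.ne']
    rw [Finset.sum_congr rfl fun g _ => this g, Finset.sum_const, smul_zero]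
    positivity
  · set lam := Real.sqrt r / Real.sqrt S2 with hlam
    have hlampos : 0 < lam := div_pos (Real.sqrt_pos.2 hr) (Real.sqrt_pos.2 hpos)
    have key : ∀ g : Fin N → Bool, |∑ j, v j * sg (g j)| ^ r
        ≤ (r / lam) ^ r * Real.exp (-r) *
          (Real.exp (lam * ∑ j, v j * sg (g j)) + Real.exp (-(lam * ∑ j, v j * sg (g j)))) :=
      fun g => abs_rpow_le _ hr hlampos
    have hlamsq : lam ^ 2 * S2 / 2 = r / 2 := by
      rw [hlam, div_pow, Real.sq_sqrt hr.le, Real.sq_sqrt hS2nn]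
      field_simp
    have hsum1 : ∑ g : Fin N → Bool, Real.exp (lam * ∑ j, v j * sg (g j))
        ≤ 2 ^ N * Real.exp (r / 2) := by
      calc _ ≤ 2 ^ N * Real.exp (lam ^ 2 * S2 / 2) := sum_exp_le v lam
        _ = 2 ^ N * Real.exp (r / 2) := by rw [hlamsq]
    have hsum2 : ∑ g : Fin N → Bool, Real.exp (-(lam * ∑ j, v j * sg (g j)))
        ≤ 2 ^ N * Real.exp (r / 2) := by
      have h := sum_exp_le v (-lam)
      have e1 : ∀ g : Fin N → Bool, Real.exp (-(lam * ∑ j, v j * sg (g j)))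
          = Real.exp (-lam * ∑ j, v j * sg (g j)) := fun g => by rw [neg_mul]
      rw [Finset.sum_congr rfl fun g _ => e1 g]
      calc ∑ g : Fin N → Bool, Real.exp (-lam * ∑ j, v j * sg (g j))
          ≤ 2 ^ N * Real.exp ((-lam) ^ 2 * S2 / 2) := h
        _ = 2 ^ N * Real.exp (r / 2) := by rw [neg_sq, hlamsq]
    have hrl : (r / lam) ^ r = r ^ (r / 2) * S2 ^ (r / 2) := by
      have h1 : r / lam = Real.sqrt r * Real.sqrt S2 := by
        rw [hlam, div_div_eq_mul_div, div_eq_iff (Real.sqrt_pos.2 hr).ne',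
          mul_right_comm, Real.mul_self_sqrt hr.le]
      rw [h1, Real.mul_rpow (Real.sqrt_nonneg _) (Real.sqrt_nonneg _),
        Real.rpow_div_two_eq_sqrt r hr.le, Real.rpow_div_two_eq_sqrt r hS2nn]
    calc ∑ g : Fin N → Bool, |∑ j, v j * sg (g j)| ^ r
        ≤ ∑ g : Fin N → Bool, (r / lam) ^ r * Real.exp (-r) *
          (Real.exp (lam * ∑ j, v j * sg (g j)) + Real.exp (-(lam * ∑ j, v j * sg (g j)))) :=
          Finset.sum_le_sum fun g _ => key g
      _ = (r / lam) ^ r * Real.exp (-r) *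
          ((∑ g : Fin N → Bool, Real.exp (lam * ∑ j, v j * sg (g j))) +
           (∑ g : Fin N → Bool, Real.exp (-(lam * ∑ j, v j * sg (g j))))) := by
          rw [← Finset.mul_sum, Finset.sum_add_distrib]
      _ ≤ (r / lam) ^ r * Real.exp (-r) * (2 ^ N * Real.exp (r / 2) + 2 ^ N * Real.exp (r / 2)) := by
          apply mul_le_mul_of_nonneg_left (add_le_add hsum1 hsum2) (by positivity)
      _ = 2 ^ N * (2 * ((r / lam) ^ r * (Real.exp (-r) * Real.exp (r / 2)))) := by ring
      _ ≤ 2 ^ N * (2 * r ^ (r / 2)) * S2 ^ (r / 2) := by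
          rw [← Real.exp_add, hrl]
          have hexple : Real.exp (-r + r / 2) ≤ 1 := by
            rw [Real.exp_le_one_iff]; linarith
          calc 2 ^ N * (2 * (r ^ (r / 2) * S2 ^ (r / 2) * Real.exp (-r + r / 2)))
              ≤ 2 ^ N * (2 * (r ^ (r / 2) * S2 ^ (r / 2) * 1)) := by
                apply mul_le_mul_of_nonneg_left _ (by positivity)
                apply mul_le_mul_of_nonneg_left _ (by positivity)
                apply mul_le_mul_of_nonneg_left hexple (by positivity)
            _ = 2 ^ N * (2 * r ^ (r / 2)) * S2 ^ (r / 2) := by ring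

lemma khintchine_lower (v : Fin N → ℝ) :
    2 ^ N * (Real.sqrt (∑ j, v j ^ 2) / 6) ≤ ∑ g : Fin N → Bool, |∑ j, v j * sg (g j)| := by
  classical
  set S2 := ∑ j, v j ^ 2 with hS2def
  have hS2nn : 0 ≤ S2 := Finset.sum_nonneg fun j _ => sq_nonneg _
  rcases eq_or_lt_of_le hS2nn with h0 | hpos
  · rw [← h0, Real.sqrt_zero, zero_div, mul_zero]
    exact Finset.sum_nonneg fun g _ => abs_nonneg _
  set X : (Fin N → Bool) → ℝ := fun g => ∑ j, v j * sg (g j) with hX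
  set S1 := ∑ g : Fin N → Bool, |X g| with hS1
  have hS1nn : 0 ≤ S1 := Finset.sum_nonneg fun g _ => abs_nonneg _
  have hK0 : ∑ g : Fin N → Bool, (X g) ^ 2 = 2 ^ N * S2 := sum_X_sq v
  have hK4 : ∑ g : Fin N → Bool, |X g| ^ (4:ℝ) ≤ 2 ^ N * 32 * S2 ^ 2 := by
    have := khintchine_upper v (r := 4) (by norm_num)
    calc ∑ g : Fin N → Bool, |X g| ^ (4:ℝ) ≤ 2 ^ N * (2 * (4:ℝ) ^ ((4:ℝ) / 2)) * S2 ^ ((4:ℝ)/2) := this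
      _ = 2 ^ N * 32 * S2 ^ 2 := by
          norm_num
  -- Hölder with exponents 3/2 and 3
  have hHolder : (2:ℝ) ^ N * S2 ≤ S1 ^ ((2:ℝ)/3) * (2 ^ N * 32 * S2 ^ 2) ^ ((1:ℝ)/3) := by
    have hconj : (3/2 : ℝ).HolderConjugate 3 := by
      constructor <;> norm_num
    have h := Real.inner_le_Lp_mul_Lq_of_nonneg (Finset.univ)
      (f := fun g : Fin N → Bool => |X g| ^ ((2:ℝ)/3))
      (g := fun g : Fin N → Bool => |X g| ^ ((4:ℝ)/3)) hconj
      (fun g _ => Real.rpow_nonneg (abs_nonneg _) _)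
      (fun g _ => Real.rpow_nonneg (abs_nonneg _) _)
    have e1 : ∀ g : Fin N → Bool, |X g| ^ ((2:ℝ)/3) * |X g| ^ ((4:ℝ)/3) = (X g)^2 := by
      intro g
      rw [← Real.rpow_add' (abs_nonneg _) (by norm_num)]
      norm_num
    have e2 : ∀ g : Fin N → Bool, (|X g| ^ ((2:ℝ)/3)) ^ ((3:ℝ)/2) = |X g| := by
      intro g
      rw [← Real.rpow_mul (abs_nonneg _)]
      norm_num
    have e3 : ∀ g : Fin N → Bool, (|X g| ^ ((4:ℝ)/3)) ^ ((3:ℝ)) = |X g| ^ (4:ℝ) := by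
      intro g
      rw [← Real.rpow_mul (abs_nonneg _)]
      norm_num
    rw [Finset.sum_congr rfl fun g _ => e1 g] at h
    rw [Finset.sum_congr rfl fun g _ => e2 g] at h
    rw [Finset.sum_congr rfl fun g _ => e3 g] at h
    rw [hK0] at h
    calc (2:ℝ) ^ N * S2 ≤ (∑ g : Fin N → Bool, |X g|) ^ (1/(3/2):ℝ)
          * (∑ g : Fin N → Bool, |X g| ^ (4:ℝ)) ^ (1/(3:ℝ)) := h
      _ = S1 ^ ((2:ℝ)/3) * (∑ g : Fin N → Bool, |X g| ^ (4:ℝ)) ^ ((1:ℝ)/3) := by norm_num [hS1]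
      _ ≤ S1 ^ ((2:ℝ)/3) * (2 ^ N * 32 * S2 ^ 2) ^ ((1:ℝ)/3) := by
          apply mul_le_mul_of_nonneg_left _ (Real.rpow_nonneg hS1nn _)
          apply Real.rpow_le_rpow (Finset.sum_nonneg fun g _ => Real.rpow_nonneg (abs_nonneg _) _)
            hK4 (by norm_num)
  -- cube both sides
  have hcube : ((2:ℝ) ^ N * S2) ^ 3 ≤ S1 ^ 2 * (2 ^ N * 32 * S2 ^ 2) := by
    have hrhs0 : (0:ℝ) ≤ S1 ^ ((2:ℝ)/3) * (2 ^ N * 32 * S2 ^ 2) ^ ((1:ℝ)/3) := by positivity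
    have := pow_le_pow_left₀ (by positivity) hHolder 3
    calc ((2:ℝ) ^ N * S2) ^ 3 ≤ (S1 ^ ((2:ℝ)/3) * (2 ^ N * 32 * S2 ^ 2) ^ ((1:ℝ)/3)) ^ 3 := this
      _ = S1 ^ 2 * (2 ^ N * 32 * S2 ^ 2) := by
          rw [mul_pow, ← Real.rpow_natCast (S1 ^ ((2:ℝ)/3)) 3, ← Real.rpow_natCast ((2 ^ N * 32 * S2 ^ 2) ^ ((1:ℝ)/3)) 3,
            ← Real.rpow_mul hS1nn, ← Real.rpow_mul (by positivity)]
          norm_num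
  -- conclude
  have hsq : (2 ^ N * (Real.sqrt S2 / 6)) ^ 2 ≤ S1 ^ 2 := by
    have hB : (0:ℝ) < 2 ^ N * 32 * S2 ^ 2 := by positivity
    have h1 : S1 ^ 2 ≥ ((2:ℝ) ^ N * S2) ^ 3 / (2 ^ N * 32 * S2 ^ 2) := by
      rw [ge_iff_le, div_le_iff₀ hB]
      exact hcube
    have h2 : ((2:ℝ) ^ N * S2) ^ 3 / (2 ^ N * 32 * S2 ^ 2) = (2:ℝ) ^ (2*N) * S2 / 32 := by
      field_simp
      ring
    have h3 : (2 ^ N * (Real.sqrt S2 / 6)) ^ 2 = (2:ℝ)^(2*N) * S2 / 36 := by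
      rw [mul_pow, div_pow, Real.sq_sqrt hS2nn, ← pow_mul, mul_comm N 2]
      ring
    rw [h3]
    calc (2:ℝ)^(2*N) * S2 / 36 ≤ (2:ℝ)^(2*N) * S2 / 32 := by
          apply div_le_div_of_nonneg_left (by positivity) (by norm_num) (by norm_num)
      _ = ((2:ℝ) ^ N * S2) ^ 3 / (2 ^ N * 32 * S2 ^ 2) := h2.symm
      _ ≤ S1 ^ 2 := h1
  have h5 := Real.sqrt_le_sqrt hsq
  rw [Real.sqrt_sq (by positivity), Real.sqrt_sq hS1nn] at h5
  exact h5

lemma exists_good {γ : Type*} [Fintype γ] [Nonempty γ] (Z W : γ → ℝ)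
    (hZ0 : ∀ g, 0 ≤ Z g) (hW0 : ∀ g, 0 ≤ W g) {M w : ℝ} (hM : 0 < M) (hw : 0 < w)
    (h1 : (Fintype.card γ : ℝ) * (M / 6) ≤ ∑ g, Z g)
    (h2 : ∑ g, (Z g) ^ 2 ≤ (Fintype.card γ : ℝ) * M ^ 2)
    (h3 : ∑ g, W g ≤ (Fintype.card γ : ℝ) * w) :
    ∃ g, M / 12 ≤ Z g ∧ W g ≤ 288 * w := by
  classical
  by_contra hcon
  push_neg at hcon
  set n : ℝ := (Fintype.card γ : ℝ) with hn
  have hnpos : 0 < n := by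
    rw [hn]
    exact_mod_cast Fintype.card_pos (α := γ)
  set A : Finset γ := Finset.univ.filter (fun g => M / 12 ≤ Z g) with hA
  set B : Finset γ := Finset.univ.filter (fun g => 288 * w < W g) with hB
  -- A ⊆ B
  have hAB : A ⊆ B := by
    intro g hg
    rw [hA, Finset.mem_filter] at hg
    rw [hB, Finset.mem_filter]
    exact ⟨Finset.mem_univ _, hcon g hg.2⟩
  -- Markov: card B ≤ n / 288
  have hBcard : (B.card : ℝ) * (288 * w) ≤ n * w := by
    calc (B.card : ℝ) * (288 * w) = ∑ _g ∈ B, (288 * w) := by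
          rw [Finset.sum_const, nsmul_eq_mul]
      _ ≤ ∑ g ∈ B, W g := by
          apply Finset.sum_le_sum
          intro g hg
          rw [hB, Finset.mem_filter] at hg
          exact hg.2.le
      _ ≤ ∑ g, W g := Finset.sum_le_sum_of_subset_of_nonneg (Finset.subset_univ _)
          (fun g _ _ => hW0 g)
      _ ≤ n * w := h3
  have hBle : (B.card : ℝ) ≤ n / 288 := by
    rw [le_div_iff₀ (by norm_num : (0:ℝ) < 288)]
    calc (B.card : ℝ) * 288 = ((B.card : ℝ) * (288 * w)) / w := by field_simp
      _ ≤ (n * w) / w := by gcongr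
      _ = n := by field_simp
  -- PZ: card A ≥ n / 144
  have hsplit : ∑ g, Z g = ∑ g ∈ A, Z g + ∑ g ∈ Aᶜ, Z g := by
    exact (Finset.sum_add_sum_compl A Z).symm
  have hAc : ∑ g ∈ Aᶜ, Z g ≤ n * (M / 12) := by
    calc ∑ g ∈ Aᶜ, Z g ≤ ∑ _g ∈ Aᶜ, (M / 12) := by
          apply Finset.sum_le_sum
          intro g hg
          rw [Finset.mem_compl, hA, Finset.mem_filter] at hg
          push_neg at hg
          exact (hg (Finset.mem_univ _)).le
      _ = (Aᶜ.card : ℝ) * (M / 12) := by rw [Finset.sum_const, nsmul_eq_mul]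
      _ ≤ n * (M / 12) := by
          apply mul_le_mul_of_nonneg_right _ (by positivity)
          exact_mod_cast Nat.cast_le.2 (Finset.card_le_univ _)
  have hApart : n * (M / 12) ≤ ∑ g ∈ A, Z g := by
    have := h1
    rw [hsplit] at this
    have h6 : n * (M/6) = n * (M/12) + n * (M/12) := by ring
    linarith
  have hACS : (∑ g ∈ A, Z g) ^ 2 ≤ (A.card : ℝ) * (n * M ^ 2) := by
    calc (∑ g ∈ A, Z g) ^ 2 ≤ (A.card : ℝ) * ∑ g ∈ A, (Z g)^2 := by
          exact_mod_cast sq_sum_le_card_mul_sum_sq (s := A) (f := Z)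
      _ ≤ (A.card : ℝ) * (n * M ^ 2) := by
          apply mul_le_mul_of_nonneg_left _ (by positivity)
          calc ∑ g ∈ A, (Z g)^2 ≤ ∑ g, (Z g)^2 :=
                Finset.sum_le_sum_of_subset_of_nonneg (Finset.subset_univ _)
                  (fun g _ _ => sq_nonneg _)
            _ ≤ n * M ^ 2 := h2
  have hAge : n / 144 ≤ (A.card : ℝ) := by
    have h7 : (n * (M / 12)) ^ 2 ≤ (A.card : ℝ) * (n * M ^ 2) := by
      calc (n * (M/12))^2 ≤ (∑ g ∈ A, Z g)^2 := by
            apply pow_le_pow_left₀ (by positivity) hApart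
        _ ≤ (A.card : ℝ) * (n * M ^ 2) := hACS
    have h8 : (n * (M / 12)) ^ 2 = (n / 144) * (n * M ^ 2) := by ring
    rw [h8] at h7
    exact le_of_mul_le_mul_right h7 (by positivity)
  -- contradiction
  have hcard : (A.card : ℝ) ≤ (B.card : ℝ) := Nat.cast_le.2 (Finset.card_le_card hAB)
  have : n / 144 ≤ n / 288 := le_trans hAge (le_trans hcard hBle)
  have : n ≤ 0 := by linarith [div_lt_div_of_pos_left hnpos (by norm_num : (0:ℝ) < 144) (by norm_num : (144:ℝ) < 288)]
  linarith

lemma exists_proj (N n : ℕ) (Q : Submodule ℝ (Fin N → ℝ)) (hQn : Module.finrank ℝ Q ≤ n) :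
    ∃ p : Fin N → Fin N → ℝ,
      (∀ i j, p i j = p j i) ∧
      (∀ i j, ∑ k, p i k * p k j = p i j) ∧
      ((N : ℝ) - n ≤ ∑ i, p i i) ∧
      (∀ z ∈ Q, ∀ j, ∑ i, p j i * z i = 0) := by
  classical
  set E := EuclideanSpace ℝ (Fin N)
  let e : E ≃ₗ[ℝ] (Fin N → ℝ) := WithLp.linearEquiv 2 ℝ (Fin N → ℝ)
  let Q' : Submodule ℝ E := Q.comap e.toLinearMap
  let V := Q'ᗮ
  let m := Module.finrank ℝ V
  let B := stdOrthonormalBasis ℝ V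
  let v : Fin m → Fin N → ℝ := fun b => e ((B b : E))
  have horth : ∀ b b' : Fin m, ∑ i, v b i * v b' i = if b = b' then 1 else 0 := by
    intro b b'
    have h1 := B.orthonormal
    rw [orthonormal_iff_ite] at h1
    have h2 := h1 b b'
    rw [Submodule.coe_inner] at h2
    rw [PiLp.inner_apply] at h2
    simp at h2; rw [← h2]; exact Finset.sum_congr rfl fun i _ => mul_comm _ _
  have horthQ : ∀ b : Fin m, ∀ z ∈ Q, ∑ i, v b i * z i = 0 := by
    intro b z hz
    have hzQ' : e.symm z ∈ Q' := by
      simp only [Q', Submodule.mem_comap, LinearEquiv.coe_coe, LinearEquiv.apply_symm_apply]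
      exact hz
    have hmem : (B b : E) ∈ Q'ᗮ := SetLike.coe_mem _
    have h3 := (Submodule.mem_orthogonal Q' ((B b : E))).1 hmem (e.symm z) hzQ'
    rw [PiLp.inner_apply] at h3
    have h4 : ∑ i, z i * v b i = 0 := by simp at h3; rw [← h3]; exact Finset.sum_congr rfl fun i _ => mul_comm _ _
    rw [← h4]
    apply Finset.sum_congr rfl
    intro i _
    ring
  have hm : (N : ℝ) - n ≤ (m : ℝ) := by
    have h1 : Module.finrank ℝ Q' + m = N := by
      have := Submodule.finrank_add_finrank_orthogonal (K := Q')
      rw [this]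
      simp [E]
    have h2 : Module.finrank ℝ Q' = Module.finrank ℝ Q := by
      have : Q' = Q.map e.symm.toLinearMap := by
        rw [Submodule.map_equiv_eq_comap_symm]
        simp [Q']
      rw [this]
      exact LinearEquiv.finrank_map_eq e.symm Q
    have h3 : Module.finrank ℝ Q' ≤ n := h2 ▸ hQn
    have h4 : (N : ℝ) = (Module.finrank ℝ Q' : ℝ) + (m : ℝ) := by exact_mod_cast h1.symm
    have h5 : (Module.finrank ℝ Q' : ℝ) ≤ n := by exact_mod_cast h3
    linarith
  refine ⟨fun i j => ∑ b, v b i * v b j, fun i j => ?_, fun i j => ?_, ?_, fun z hz j => ?_⟩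
  · apply Finset.sum_congr rfl; intro b _; ring
  · -- idempotent
    have : ∀ k, (∑ b, v b i * v b k) * (∑ b', v b' k * v b' j)
        = ∑ b, ∑ b', (v b i * v b' j) * (v b k * v b' k) := by
      intro k
      rw [Finset.sum_mul_sum]
      apply Finset.sum_congr rfl; intro b _
      apply Finset.sum_congr rfl; intro b' _
      ring
    rw [Finset.sum_congr rfl fun k _ => this k]
    rw [Finset.sum_comm]
    have h6 : ∀ b, ∑ k, ∑ b', (v b i * v b' j) * (v b k * v b' k) = v b i * v b j := by
      intro b
      rw [Finset.sum_comm]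
      have h7 : ∀ b', ∑ k, (v b i * v b' j) * (v b k * v b' k)
          = (v b i * v b' j) * (if b = b' then 1 else 0) := by
        intro b'
        rw [← Finset.mul_sum, horth]
      rw [Finset.sum_congr rfl fun b' _ => h7 b']
      simp
    rw [Finset.sum_congr rfl fun b _ => h6 b]
  · -- trace
    have h8 : ∑ i, ∑ b, v b i * v b i = (m : ℝ) := by
      rw [Finset.sum_comm]
      have : ∀ b, ∑ i, v b i * v b i = 1 := by
        intro b
        have := horth b b
        simpa using this
      rw [Finset.sum_congr rfl fun b _ => this b]
      simp
    rw [h8]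
    exact hm
  · -- orthogonality
    have : ∀ i, (∑ b, v b j * v b i) * z i = ∑ b, v b j * (v b i * z i) := by
      intro i
      rw [Finset.sum_mul]
      apply Finset.sum_congr rfl; intro b _; ring
    rw [Finset.sum_congr rfl fun i _ => this i, Finset.sum_comm]
    apply Finset.sum_eq_zero
    intro b _
    rw [← Finset.mul_sum, horthQ b z hz, mul_zero]

lemma exists_perm_avg {N : ℕ} (H : Subgroup (Equiv.Perm (Fin N)))
    (htrans : ∀ i j : Fin N, ∃ h ∈ H, h i = j) (hN : 0 < N) (w φ : Fin N → ℝ) :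
    ∃ π, π ∈ H ∧ (∑ i, w i) * (∑ j, φ j) ≤ (N : ℝ) * ∑ i, w i * φ (π i) := by
  classical
  letI : Fintype H := Fintype.ofFinite _
  haveI : Nonempty H := ⟨1⟩
  let i₀ : Fin N := ⟨0, hN⟩
  -- all base points give the same sum
  have key1 : ∀ i : Fin N, ∑ π : H, φ ((π : Equiv.Perm (Fin N)) i)
      = ∑ π : H, φ ((π : Equiv.Perm (Fin N)) i₀) := by
    intro i
    obtain ⟨h, hh, hhi⟩ := htrans i₀ i
    apply Fintype.sum_equiv (Equiv.mulRight (⟨h, hh⟩ : H))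
    intro π
    have : ((π * (⟨h, hh⟩ : H) : H) : Equiv.Perm (Fin N)) i₀
        = (π : Equiv.Perm (Fin N)) i := by
      rw [Subgroup.coe_mul, Equiv.Perm.mul_apply, hhi]
    rw [Equiv.coe_mulRight, this]
  set A : ℝ := ∑ π : H, φ ((π : Equiv.Perm (Fin N)) i₀) with hA
  have key2 : (N : ℝ) * A = (Fintype.card H : ℝ) * ∑ j, φ j := by
    have h1 : ∑ i : Fin N, ∑ π : H, φ ((π : Equiv.Perm (Fin N)) i)
        = ∑ π : H, ∑ i : Fin N, φ ((π : Equiv.Perm (Fin N)) i) := Finset.sum_comm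
    have h2 : ∀ π : H, ∑ i : Fin N, φ ((π : Equiv.Perm (Fin N)) i) = ∑ j, φ j := by
      intro π
      exact Equiv.sum_comp (π : Equiv.Perm (Fin N)) φ
    have h3 : ∑ i : Fin N, ∑ π : H, φ ((π : Equiv.Perm (Fin N)) i) = (N : ℝ) * A := by
      rw [Finset.sum_congr rfl fun i _ => key1 i]
      rw [Finset.sum_const, nsmul_eq_mul, Finset.card_univ, Fintype.card_fin]
    rw [← h3, h1, Finset.sum_congr rfl fun π _ => h2 π, Finset.sum_const, nsmul_eq_mul,
      Finset.card_univ]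
  -- sum over H of the target quantity
  have key3 : ∑ π : H, ((N : ℝ) * ∑ i, w i * φ ((π : Equiv.Perm (Fin N)) i))
      = (Fintype.card H : ℝ) * ((∑ i, w i) * (∑ j, φ j)) := by
    have h4 : ∑ π : H, ∑ i, w i * φ ((π : Equiv.Perm (Fin N)) i)
        = (∑ i, w i) * A := by
      rw [Finset.sum_comm]
      have h5 : ∀ i : Fin N, ∑ π : H, w i * φ ((π : Equiv.Perm (Fin N)) i) = w i * A := by
        intro i
        rw [← Finset.mul_sum, key1 i]
      rw [Finset.sum_congr rfl fun i _ => h5 i, Finset.sum_mul]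
    rw [← Finset.mul_sum, h4, ← mul_assoc, mul_comm (N:ℝ) (∑ i, w i), mul_assoc, key2]
    ring
  have key4 : ∑ _π : H, (∑ i, w i) * (∑ j, φ j)
      ≤ ∑ π : H, ((N : ℝ) * ∑ i, w i * φ ((π : Equiv.Perm (Fin N)) i)) := by
    rw [key3, Finset.sum_const, nsmul_eq_mul, Finset.card_univ]
  obtain ⟨π, _, hπ⟩ := Finset.exists_le_of_sum_le Finset.univ_nonempty key4
  exact ⟨(π : Equiv.Perm (Fin N)), π.2, hπ⟩

set_option maxHeartbeats 2000000 in
lemma main_bound {q ε : ℝ} (hq1 : 1 < q) (hq2 : q ≤ 2) (hε0 : 0 < ε) (hε1 : ε < 1)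
    {N : ℕ} (H : Subgroup (Equiv.Perm (Fin N)))
    (htrans : ∀ i j : Fin N, ∃ h ∈ H, h i = j)
    {K : Set (Fin N → ℝ)}
    (hK : ∀ π ∈ H, ∀ x ∈ K, ∀ ε' : Fin N → ℝ, (∀ i, ε' i = 1 ∨ ε' i = -1) →
        (fun i => ε' i * x (π i)) ∈ K)
    {n : ℕ} (hn : (n : ℝ) ≤ N * (1 - ε))
    {x : Fin N → ℝ} (hx : x ∈ K) (hxpos : 0 < ∑ j, |x j| ^ q)
    (Q : Submodule ℝ (Fin N → ℝ)) (hQ : Module.finrank ℝ Q ≤ n) :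
    ∃ y ∈ K, (ε / (12 * (288 * (2 * (q/(q-1)) ^ ((q/(q-1)) / 2))) ^ (1/(q/(q-1))))) * lqN q x
      ≤ distq q y Q := by
  classical
  -- exponent bookkeeping
  have hq0 : 0 < q := lt_trans zero_lt_one hq1
  have hqm1 : 0 < q - 1 := by linarith
  set r : ℝ := q / (q - 1) with hrdef
  have hr1 : 1 < r := by
    rw [hrdef, lt_div_iff₀ hqm1]
    linarith
  have hr0 : 0 < r := lt_trans zero_lt_one hr1
  have hr2 : 2 ≤ r := by
    rw [hrdef, le_div_iff₀ hqm1]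
    linarith
  have hqr : 1/q + 1/r = 1 := by
    rw [hrdef]
    field_simp
    ring
  have hqr' : (q - 1) * r = q := by
    rw [hrdef]
    field_simp
  have hconj : r.HolderConjugate q := by
    rw [Real.holderConjugate_iff]
    constructor
    · exact hr1
    · rw [inv_eq_one_div, inv_eq_one_div, add_comm]; exact hqr
  set Cr : ℝ := 2 * r ^ (r / 2) with hCr
  have hCrpos : 0 < Cr := by rw [hCr]; positivity
  set Xq : ℝ := ∑ j, |x j| ^ q with hXq
  -- N positive
  have hN : 0 < N := by
    rcases Nat.eq_zero_or_pos N with h | h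
    · exfalso
      have hempty : IsEmpty (Fin N) := by rw [h]; exact Fin.isEmpty
      have : Xq = 0 := by
        rw [hXq]
        exact Finset.sum_of_isEmpty _
      linarith
    · exact h
  -- projection matrix
  obtain ⟨p, hpsym, hpidem, hptr, hporth⟩ := exists_proj N n Q hQ
  have hpdiag : ∀ i, p i i = ∑ k, (p i k) ^ 2 := by
    intro i
    rw [← hpidem i i]
    apply Finset.sum_congr rfl
    intro k _
    rw [sq, hpsym k i]
  have hp0 : ∀ i, 0 ≤ p i i := by
    intro i
    rw [hpdiag i]
    exact Finset.sum_nonneg fun k _ => sq_nonneg _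
  have hp1 : ∀ i, p i i ≤ 1 := by
    intro i
    have h1 : (p i i) ^ 2 ≤ p i i := by
      conv_rhs => rw [hpdiag i]
      exact Finset.single_le_sum (fun k (_ : k ∈ Finset.univ) => sq_nonneg (p i k))
        (Finset.mem_univ i)
    nlinarith [hp0 i]
  have hpcol : ∀ j, ∑ i, (p i j) ^ 2 = p j j := by
    intro j
    rw [hpdiag j]
    apply Finset.sum_congr rfl
    intro i _
    rw [hpsym i j]
  -- trace bound
  have htrace : ε * N ≤ ∑ i, p i i := by
    have : (N : ℝ) - n ≥ ε * N := by nlinarith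
    linarith
  -- choose the permutation
  obtain ⟨π, hπH, hπ⟩ := exists_perm_avg H htrans hN (fun i => p i i) (fun j => |x j| ^ q)
  set T : ℝ := ∑ i, p i i * |x (π i)| ^ q with hT
  have hTge : ε * Xq ≤ T := by
    have h1 : (∑ i, p i i) * Xq ≤ (N:ℝ) * T := hπ
    have h2 : (ε * N) * Xq ≤ (∑ i, p i i) * Xq := by
      apply mul_le_mul_of_nonneg_right htrace hxpos.le
    have hNpos : (0:ℝ) < N := by exact_mod_cast hN
    nlinarith
  have hTpos : 0 < T := lt_of_lt_of_le (by positivity) hTge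
  -- the dual vector ingredients
  set d : Fin N → ℝ := fun j => |x (π j)| ^ (q - 1) with hd
  have hd0 : ∀ j, 0 ≤ d j := fun j => Real.rpow_nonneg (abs_nonneg _) _
  set v : Fin N → Fin N → ℝ := fun i j => p i j * d j with hv
  set S2 : Fin N → ℝ := fun i => ∑ j, (v i j) ^ 2 with hS2
  have hS2nn : ∀ i, 0 ≤ S2 i := fun i => Finset.sum_nonneg fun j _ => sq_nonneg _
  set σ : Fin N → ℝ := fun i => Real.sqrt (S2 i) with hσ
  have hσ0 : ∀ i, 0 ≤ σ i := fun i => Real.sqrt_nonneg _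
  have hσlb : ∀ i, p i i * d i ≤ σ i := by
    intro i
    have h1 : (p i i * d i) ^ 2 ≤ S2 i := by
      have : (p i i * d i) ^ 2 = (v i i) ^ 2 := by rw [hv]
      rw [this, hS2]
      exact Finset.single_le_sum (fun k (_ : k ∈ Finset.univ) => sq_nonneg (v i k))
        (Finset.mem_univ i)
    calc p i i * d i ≤ |p i i * d i| := le_abs_self _
      _ = Real.sqrt ((p i i * d i) ^ 2) := (Real.sqrt_sq_eq_abs _).symm
      _ ≤ σ i := Real.sqrt_le_sqrt h1
  have hdr : ∀ j, d j ^ r = |x (π j)| ^ q := by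
    intro j
    rw [hd, ← Real.rpow_mul (abs_nonneg _), hqr']
  have habsd : ∀ j, |x (π j)| * d j = |x (π j)| ^ q := by
    intro j
    rw [hd, ← Real.rpow_one_add' (abs_nonneg _) (by rw [add_sub_cancel]; exact hq0.ne')]
    rw [add_sub_cancel]
  -- row-wise Hölder: ∑ σ^r ≤ Xq
  have hσr : ∑ i, σ i ^ r ≤ Xq := by
    have hstepA : ∀ i, σ i ^ r = (S2 i) ^ (r / 2) := by
      intro i
      rw [hσ, Real.rpow_div_two_eq_sqrt r (hS2nn i)]
    have hstepB : ∀ i, (S2 i) ^ (r / 2) ≤ ∑ j, (p i j) ^ 2 * d j ^ r := by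
      intro i
      have hexp : ∀ j, (v i j) ^ 2 = (p i j) ^ 2 * (d j) ^ 2 := by
        intro j; rw [hv]; ring
      rcases eq_or_lt_of_le hr2 with hre | hrl
      · -- r = 2
        have h22 : (S2 i) ^ (r/2) = S2 i := by
          rw [← hre]
          norm_num
        rw [h22]
        apply le_of_eq
        rw [hS2]
        apply Finset.sum_congr rfl
        intro j _
        rw [hexp j, ← hre, Real.rpow_two]
      · -- 2 < r
        set t : ℝ := r / 2 with ht
        have ht1 : 1 < t := by rw [ht]; linarith
        have ht0 : 0 < t := lt_trans zero_lt_one ht1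
        set t' : ℝ := t / (t - 1) with ht'
        have htm1 : 0 < t - 1 := by linarith
        have ht'pos : 0 < t' := by positivity
        have htc : t'.HolderConjugate t := by
          rw [Real.holderConjugate_iff]
          constructor
          · rw [ht', lt_div_iff₀ htm1]; linarith
          · rw [ht']; field_simp; ring
        set a : Fin N → ℝ := fun j => (p i j) ^ 2 with ha
        have ha0 : ∀ j, 0 ≤ a j := fun j => sq_nonneg _
        set b : Fin N → ℝ := fun j => (d j) ^ 2 with hb
        have hb0 : ∀ j, 0 ≤ b j := fun j => sq_nonneg _
        have hH := Real.inner_le_Lp_mul_Lq_of_nonneg Finset.univ htc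
          (f := fun j => a j ^ (1 / t')) (g := fun j => a j ^ (1 / t) * b j)
          (fun j _ => Real.rpow_nonneg (ha0 j) _)
          (fun j _ => mul_nonneg (Real.rpow_nonneg (ha0 j) _) (hb0 j))
        have e1 : ∀ j, a j ^ ((1:ℝ) / t') * (a j ^ ((1:ℝ) / t) * b j) = a j * b j := by
          intro j
          rw [← mul_assoc, ← Real.rpow_add' (ha0 j) (by
            rw [one_div, one_div, htc.inv_add_inv_eq_one]; norm_num)]
          rw [one_div, one_div, htc.inv_add_inv_eq_one, Real.rpow_one]
        have e2 : ∀ j, (a j ^ ((1:ℝ) / t')) ^ t' = a j := by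
          intro j
          rw [← Real.rpow_mul (ha0 j), one_div, inv_mul_cancel₀ ht'pos.ne', Real.rpow_one]
        have e3 : ∀ j, (a j ^ ((1:ℝ) / t) * b j) ^ t = a j * d j ^ r := by
          intro j
          rw [Real.mul_rpow (Real.rpow_nonneg (ha0 j) _) (hb0 j),
            ← Real.rpow_mul (ha0 j), one_div, inv_mul_cancel₀ ht0.ne', Real.rpow_one]
          congr 1
          rw [hb, ← Real.rpow_natCast_mul (hd0 j) 2 t]
          congr 1
          rw [ht]
          ring
        rw [Finset.sum_congr rfl fun j _ => e1 j] at hH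
        rw [Finset.sum_congr rfl fun j _ => e2 j] at hH
        rw [Finset.sum_congr rfl fun j _ => e3 j] at hH
        have hab : ∑ j, a j * b j = S2 i := by
          rw [hS2]
          apply Finset.sum_congr rfl
          intro j _
          rw [hexp j]
        have hsa : ∑ j, a j = p i i := (hpdiag i).symm
        rw [hab, hsa] at hH
        -- raise to the power t
        have hRnn : 0 ≤ ∑ j, a j * d j ^ r :=
          Finset.sum_nonneg fun j _ => mul_nonneg (ha0 j) (Real.rpow_nonneg (hd0 j) _)
        have hup := Real.rpow_le_rpow (hS2nn i) hH ht0.le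
        rw [Real.mul_rpow (Real.rpow_nonneg (hp0 i) _) (Real.rpow_nonneg hRnn _),
          ← Real.rpow_mul (hp0 i), ← Real.rpow_mul hRnn, one_div, one_div,
          inv_mul_cancel₀ ht0.ne', Real.rpow_one] at hup
        calc (S2 i) ^ (r/2) = (S2 i) ^ t := by rw [ht]
          _ ≤ p i i ^ (t'⁻¹ * t) * ∑ j, a j * d j ^ r := hup
          _ ≤ 1 * ∑ j, a j * d j ^ r := by
              apply mul_le_mul_of_nonneg_right _ hRnn
              apply Real.rpow_le_one (hp0 i) (hp1 i)
              positivity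
          _ = ∑ j, (p i j) ^ 2 * d j ^ r := by rw [one_mul]
    calc ∑ i, σ i ^ r = ∑ i, (S2 i) ^ (r/2) :=
          Finset.sum_congr rfl fun i _ => hstepA i
      _ ≤ ∑ i, ∑ j, (p i j) ^ 2 * d j ^ r :=
          Finset.sum_le_sum fun i _ => hstepB i
      _ = ∑ j, (∑ i, (p i j) ^ 2) * d j ^ r := by
          rw [Finset.sum_comm]
          apply Finset.sum_congr rfl
          intro j _
          rw [Finset.sum_mul]
      _ = ∑ j, p j j * d j ^ r := by
          apply Finset.sum_congr rfl
          intro j _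
          rw [hpcol j]
      _ ≤ ∑ j, d j ^ r := by
          apply Finset.sum_le_sum
          intro j _
          calc p j j * d j ^ r ≤ 1 * d j ^ r := by
                apply mul_le_mul_of_nonneg_right (hp1 j) (Real.rpow_nonneg (hd0 j) _)
            _ = d j ^ r := one_mul _
      _ = ∑ j, |x (π j)| ^ q := Finset.sum_congr rfl fun j _ => hdr j
      _ = Xq := by
          rw [hXq]
          exact Equiv.sum_comp π (fun j => |x j| ^ q)
  -- M
  set M : ℝ := ∑ i, |x (π i)| * σ i with hM
  have hMT : T ≤ M := by
    rw [hM, hT]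
    apply Finset.sum_le_sum
    intro i _
    calc p i i * |x (π i)| ^ q = |x (π i)| * (p i i * d i) := by
          rw [← habsd i]; ring
      _ ≤ |x (π i)| * σ i := by
          apply mul_le_mul_of_nonneg_left (hσlb i) (abs_nonneg _)
  have hMpos : 0 < M := lt_of_lt_of_le hTpos hMT
  have hσrS : ∀ i, σ i ^ r = (S2 i) ^ (r / 2) := by
    intro i
    rw [hσ, Real.rpow_div_two_eq_sqrt r (hS2nn i)]
  -- sign space
  set F : (Fin N → Bool) → Fin N → ℝ := fun g i => ∑ j, v i j * sg (g j) with hF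
  set Z : (Fin N → Bool) → ℝ := fun g => ∑ i, |x (π i)| * |F g i| with hZ
  set Wf : (Fin N → Bool) → ℝ := fun g => ∑ i, |F g i| ^ r with hWf
  have hZ0 : ∀ g, 0 ≤ Z g :=
    fun g => Finset.sum_nonneg fun i _ => mul_nonneg (abs_nonneg _) (abs_nonneg _)
  have hW0 : ∀ g, 0 ≤ Wf g :=
    fun g => Finset.sum_nonneg fun i _ => Real.rpow_nonneg (abs_nonneg _) _
  have hZsum : (2:ℝ) ^ N * (M / 6) ≤ ∑ g : Fin N → Bool, Z g := by
    rw [hZ]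
    rw [Finset.sum_comm]
    calc (2:ℝ) ^ N * (M / 6) = ∑ i, |x (π i)| * (2 ^ N * (σ i / 6)) := by
          rw [hM, Finset.sum_div, Finset.mul_sum]
          apply Finset.sum_congr rfl
          intro i _
          ring
      _ ≤ ∑ i, ∑ g : Fin N → Bool, |x (π i)| * |F g i| := by
          apply Finset.sum_le_sum
          intro i _
          rw [← Finset.mul_sum]
          apply mul_le_mul_of_nonneg_left _ (abs_nonneg _)
          exact khintchine_lower (fun j => v i j)
  have hZ2sum : ∑ g : Fin N → Bool, (Z g) ^ 2 ≤ (2:ℝ) ^ N * M ^ 2 := by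
    have hpair : ∀ i i' : Fin N, ∑ g : Fin N → Bool, |F g i| * |F g i'|
        ≤ 2 ^ N * (σ i * σ i') := by
      intro i i'
      have hcs := Finset.sum_mul_sq_le_sq_mul_sq Finset.univ
        (fun g : Fin N → Bool => |F g i|) (fun g => |F g i'|)
      have e1 : ∀ i₀ : Fin N, ∑ g : Fin N → Bool, |F g i₀| ^ 2 = 2 ^ N * S2 i₀ := by
        intro i₀
        calc ∑ g : Fin N → Bool, |F g i₀| ^ 2 = ∑ g : Fin N → Bool, (F g i₀) ^ 2 := by
              apply Finset.sum_congr rfl; intro g _; rw [sq_abs]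
          _ = 2 ^ N * S2 i₀ := by rw [hS2]; exact sum_X_sq (fun j => v i₀ j)
      rw [e1 i, e1 i'] at hcs
      have hnn : 0 ≤ ∑ g : Fin N → Bool, |F g i| * |F g i'| :=
        Finset.sum_nonneg fun g _ => mul_nonneg (abs_nonneg _) (abs_nonneg _)
      have hsq : ((2:ℝ) ^ N * (σ i * σ i')) ^ 2 = (2 ^ N * S2 i) * (2 ^ N * S2 i') := by
        have s1 : σ i ^ 2 = S2 i := Real.sq_sqrt (hS2nn i)
        have s2 : σ i' ^ 2 = S2 i' := Real.sq_sqrt (hS2nn i')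
        rw [← s1, ← s2]; ring
      have h3 : (∑ g : Fin N → Bool, |F g i| * |F g i'|) ^ 2
          ≤ ((2:ℝ) ^ N * (σ i * σ i')) ^ 2 := by rw [hsq]; exact hcs
      have h4 := Real.sqrt_le_sqrt h3
      rw [Real.sqrt_sq hnn, Real.sqrt_sq (by positivity)] at h4
      exact h4
    have hexpand : ∀ g : Fin N → Bool, (Z g) ^ 2
        = ∑ i, ∑ i', (|x (π i)| * |x (π i')|) * (|F g i| * |F g i'|) := by
      intro g
      rw [hZ, sq, Finset.sum_mul_sum]
      apply Finset.sum_congr rfl; intro i _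
      apply Finset.sum_congr rfl; intro i' _
      ring
    calc ∑ g : Fin N → Bool, (Z g) ^ 2
        = ∑ i, ∑ g : Fin N → Bool, ∑ i', (|x (π i)| * |x (π i')|) * (|F g i| * |F g i'|) := by
          rw [Finset.sum_congr rfl fun g (_ : g ∈ Finset.univ) => hexpand g]
          exact Finset.sum_comm
      _ = ∑ i, ∑ i', (|x (π i)| * |x (π i')|) * ∑ g : Fin N → Bool, |F g i| * |F g i'| := by
          apply Finset.sum_congr rfl; intro i _
          rw [Finset.sum_comm]
          apply Finset.sum_congr rfl; intro i' _
          rw [Finset.mul_sum]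
      _ ≤ ∑ i, ∑ i', (|x (π i)| * |x (π i')|) * (2 ^ N * (σ i * σ i')) := by
          apply Finset.sum_le_sum; intro i _
          apply Finset.sum_le_sum; intro i' _
          exact mul_le_mul_of_nonneg_left (hpair i i') (by positivity)
      _ = 2 ^ N * M ^ 2 := by
          rw [hM, sq, Finset.sum_mul_sum, Finset.mul_sum]
          apply Finset.sum_congr rfl; intro i _
          rw [Finset.mul_sum]
          apply Finset.sum_congr rfl; intro i' _
          ring
  have hWsum : ∑ g : Fin N → Bool, Wf g ≤ (2:ℝ) ^ N * (Cr * Xq) := by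
    rw [hWf, Finset.sum_comm]
    calc ∑ i, ∑ g : Fin N → Bool, |F g i| ^ r
        ≤ ∑ i, 2 ^ N * Cr * (S2 i) ^ (r / 2) := by
          apply Finset.sum_le_sum
          intro i _
          have := khintchine_upper (fun j => v i j) hr0
          calc ∑ g : Fin N → Bool, |F g i| ^ r
              ≤ 2 ^ N * (2 * r ^ (r/2)) * (∑ j, (v i j) ^ 2) ^ (r/2) := this
            _ = 2 ^ N * Cr * (S2 i) ^ (r/2) := by rw [hCr, hS2]
      _ = 2 ^ N * Cr * ∑ i, (S2 i) ^ (r / 2) := by rw [Finset.mul_sum]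
      _ = 2 ^ N * Cr * ∑ i, σ i ^ r := by
          rw [Finset.sum_congr rfl fun i _ => (hσrS i).symm]
      _ ≤ 2 ^ N * Cr * Xq := by
          apply mul_le_mul_of_nonneg_left hσr (by positivity)
      _ = 2 ^ N * (Cr * Xq) := by ring
  -- find a good sign vector
  have hcard : ((Fintype.card (Fin N → Bool) : ℕ) : ℝ) = (2:ℝ) ^ N := by
    rw [card_cube]
    push_cast
    ring
  obtain ⟨g, hZg, hWg⟩ := exists_good Z Wf hZ0 hW0 hMpos
    (mul_pos hCrpos hxpos : (0:ℝ) < Cr * Xq)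
    (by rw [hcard]; exact hZsum) (by rw [hcard]; exact hZ2sum) (by rw [hcard]; exact hWsum)
  -- the dual functional and the orbit point
  set f : Fin N → ℝ := fun i => F g i with hf
  set δ : Fin N → ℝ := fun i => if 0 ≤ f i * x (π i) then (1:ℝ) else -1 with hδ
  have hδpm : ∀ i, δ i = 1 ∨ δ i = -1 := by
    intro i
    by_cases h : 0 ≤ f i * x (π i)
    · left; simp only [hδ]; rw [if_pos h]
    · right; simp only [hδ]; rw [if_neg h]
  set y : Fin N → ℝ := fun i => δ i * x (π i) with hy
  have hyK : y ∈ K := hK π hπH x hx δ hδpm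
  have hfy : ∑ i, f i * y i = Z g := by
    rw [hZ]
    apply Finset.sum_congr rfl
    intro i _
    have hyi : y i = δ i * x (π i) := rfl
    have hfi : F g i = f i := rfl
    rw [hyi, hfi]
    by_cases h : 0 ≤ f i * x (π i)
    · have hδi : δ i = 1 := by simp only [hδ]; rw [if_pos h]
      rw [hδi, one_mul, ← abs_of_nonneg h, abs_mul]
      ring
    · push_neg at h
      have hδi : δ i = -1 := by simp only [hδ]; rw [if_neg (not_le.2 h)]
      rw [hδi, show f i * (-1 * x (π i)) = -(f i * x (π i)) by ring, ← abs_of_neg h, abs_mul]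
      ring
  have hforth : ∀ z ∈ Q, ∑ i, f i * z i = 0 := by
    intro z hz
    have e : ∀ i, f i * z i = ∑ j, (d j * sg (g j)) * (p i j * z i) := by
      intro i
      rw [hf, hF, Finset.sum_mul]
      apply Finset.sum_congr rfl
      intro j _
      rw [hv]
      ring
    rw [Finset.sum_congr rfl fun i (_ : i ∈ Finset.univ) => e i, Finset.sum_comm]
    apply Finset.sum_eq_zero
    intro j _
    rw [← Finset.mul_sum]
    have : ∑ i, p i j * z i = ∑ i, p j i * z i := by
      apply Finset.sum_congr rfl
      intro i _
      rw [hpsym i j]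
    rw [this, hporth z hz j, mul_zero]
  -- positivity of Z g and Wf g
  have hZgpos : 0 < Z g := lt_of_lt_of_le (div_pos hMpos (by norm_num)) hZg
  have hWfpos : 0 < Wf g := by
    rcases eq_or_lt_of_le (hW0 g) with h0 | h
    · exfalso
      have hall : ∀ i, |F g i| ^ r = 0 := by
        intro i
        have := (Finset.sum_eq_zero_iff_of_nonneg
          (fun i (_ : i ∈ Finset.univ) => Real.rpow_nonneg (abs_nonneg (F g i)) r)).1 h0.symm i
          (Finset.mem_univ i)
        exact this
      have hf0 : ∀ i, F g i = 0 := by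
        intro i
        have h1 := hall i
        rw [Real.rpow_eq_zero (abs_nonneg _) hr0.ne'] at h1
        exact abs_eq_zero.1 h1
      have : Z g = 0 := by
        rw [hZ]
        apply Finset.sum_eq_zero
        intro i _
        rw [hf0 i, abs_zero, mul_zero]
      linarith
    · exact h
  -- conclusion: lower bound on the distance
  set cc : ℝ := ε / (12 * (288 * Cr) ^ (1 / r)) with hcc
  have hPpos : (0:ℝ) < (288 * Cr) ^ (1/r) := by positivity
  have hccpos : 0 < cc := by rw [hcc]; positivity
  have hZXq : ε * Xq / 12 ≤ Z g := by
    have : ε * Xq ≤ M := le_trans hTge hMT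
    calc ε * Xq / 12 ≤ M / 12 := by linarith
      _ ≤ Z g := hZg
  have hWpow : (0:ℝ) < Wf g ^ (1 / r) := Real.rpow_pos_of_pos hWfpos _
  have hkey : ∀ z ∈ Q, cc * Xq ^ (1 / q) ≤ lqN q (fun i => y i - z i) := by
    intro z hz
    have hHold : Z g ≤ Wf g ^ (1 / r) * lqN q (fun i => y i - z i) := by
      have h1 := Real.inner_le_Lp_mul_Lq Finset.univ f (fun i => y i - z i) hconj
      have h2 : ∑ i, f i * (y i - z i) = Z g := by
        rw [Finset.sum_congr rfl (fun i (_ : i ∈ Finset.univ) =>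
          (mul_sub (f i) (y i) (z i) : f i * (y i - z i) = f i * y i - f i * z i)),
          Finset.sum_sub_distrib, hforth z hz, sub_zero, hfy]
      have h3 : ∑ i, |f i| ^ r = Wf g := by
        rw [hWf]
      have h4 : lqN q (fun i => y i - z i) = (∑ i, |y i - z i| ^ q) ^ ((1:ℝ)/q) := rfl
      rw [h2, h3] at h1
      rw [h4]
      exact h1
    have hWub : Wf g ^ (1 / r) ≤ (288 * Cr) ^ (1/r) * Xq ^ (1/r) := by
      calc Wf g ^ (1/r) ≤ (288 * (Cr * Xq)) ^ (1/r) :=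
            Real.rpow_le_rpow (hW0 g) hWg (by positivity)
        _ = (288 * Cr) ^ (1/r) * Xq ^ (1/r) := by
            rw [show (288:ℝ) * (Cr * Xq) = (288 * Cr) * Xq by ring,
              Real.mul_rpow (by positivity) hxpos.le]
    have hXqq : Xq ^ ((1:ℝ)/q) * Xq ^ ((1:ℝ)/r) = Xq := by
      rw [← Real.rpow_add hxpos, hqr, Real.rpow_one]
    have hprod : cc * Xq ^ ((1:ℝ)/q) * ((288 * Cr) ^ ((1:ℝ)/r) * Xq ^ ((1:ℝ)/r)) = ε * Xq / 12 := by
      have hPne : ((288 * Cr) ^ ((1:ℝ)/r)) ≠ 0 := hPpos.ne'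
      calc cc * Xq ^ ((1:ℝ)/q) * ((288 * Cr) ^ ((1:ℝ)/r) * Xq ^ ((1:ℝ)/r))
          = (ε / (12 * (288 * Cr) ^ ((1:ℝ)/r))) * (288 * Cr) ^ ((1:ℝ)/r)
            * (Xq ^ ((1:ℝ)/q) * Xq ^ ((1:ℝ)/r)) := by
            rw [hcc]; ring
        _ = (ε / (12 * (288 * Cr) ^ ((1:ℝ)/r))) * (288 * Cr) ^ ((1:ℝ)/r) * Xq := by
            rw [hXqq]
        _ = ε * Xq / 12 := by
            field_simp
    have hchain : cc * Xq ^ ((1:ℝ)/q) * Wf g ^ ((1:ℝ)/r) ≤ Z g := by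
      calc cc * Xq ^ ((1:ℝ)/q) * Wf g ^ ((1:ℝ)/r)
          ≤ cc * Xq ^ ((1:ℝ)/q) * ((288 * Cr) ^ ((1:ℝ)/r) * Xq ^ ((1:ℝ)/r)) := by
            apply mul_le_mul_of_nonneg_left hWub (by positivity)
        _ = ε * Xq / 12 := hprod
        _ ≤ Z g := hZXq
    calc cc * Xq ^ (1/q) ≤ Z g / Wf g ^ ((1:ℝ)/r) := (le_div_iff₀ hWpow).2 hchain
      _ ≤ lqN q (fun i => y i - z i) := by
          rw [div_le_iff₀ hWpow]
          calc Z g ≤ Wf g ^ ((1:ℝ)/r) * lqN q (fun i => y i - z i) := hHold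
            _ = lqN q (fun i => y i - z i) * Wf g ^ ((1:ℝ)/r) := by ring
  refine ⟨y, hyK, ?_⟩
  have hlq : lqN q x = Xq ^ ((1:ℝ)/q) := by
    rw [hXq]
    rfl
  rw [hlq]
  have : distq q y Q = ⨅ z : Q, lqN q (fun i => y i - (z : Fin N → ℝ) i) := rfl
  rw [this]
  apply le_ciInf
  intro z
  exact hkey z z.2

end Stmt15Aux

/-- If `H ≤ S_N` acts transitively on coordinates and `K ⊆ ℝ^N` is unconditional and
`H`-invariant, then for `1 < q ≤ 2`, `ε ∈ (0,1)` and `n ≤ N(1-ε)`,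
`d_n(K, ℓ_q^N) ≥ c(q,ε) sup_{x ∈ K} ‖x‖_q`. -/
theorem stmt15 (q ε : ℝ) (hq1 : 1 < q) (hq2 : q ≤ 2) (hε : ε ∈ Set.Ioo (0:ℝ) 1) :
    ∃ c > 0, ∀ (N : ℕ) (H : Subgroup (Equiv.Perm (Fin N))),
      (∀ i j : Fin N, ∃ h ∈ H, h i = j) →
      ∀ K : Set (Fin N → ℝ),
      (∀ π ∈ H, ∀ x ∈ K, ∀ ε' : Fin N → ℝ, (∀ i, ε' i = 1 ∨ ε' i = -1) →
        (fun i => ε' i * x (π i)) ∈ K) →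
      ∀ n : ℕ, (n : ℝ) ≤ N * (1 - ε) →
      dKol n q K ≥ c * ⨆ x : K, lqN q x.1 := by
  obtain ⟨hε0, hε1⟩ := hε
  have hq0 : 0 < q := lt_trans zero_lt_one hq1
  have hqm1 : 0 < q - 1 := by linarith
  have hr0 : 0 < q / (q - 1) := by positivity
  refine ⟨ε / (12 * (288 * (2 * (q/(q-1)) ^ ((q/(q-1)) / 2))) ^ (1/(q/(q-1)))), by positivity, ?_⟩
  set c : ℝ := ε / (12 * (288 * (2 * (q/(q-1)) ^ ((q/(q-1)) / 2))) ^ (1/(q/(q-1)))) with hc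
  have hcpos : 0 < c := by rw [hc]; positivity
  intro N H htrans K hK n hn
  rw [ge_iff_le]
  haveI hQne : Nonempty {Q : Submodule ℝ (Fin N → ℝ) // Module.finrank ℝ Q ≤ n} :=
    ⟨⟨⊥, by simpa using Nat.zero_le n⟩⟩
  have hdnn : 0 ≤ dKol n q K := by
    apply le_ciInf
    intro Qs
    apply Real.iSup_nonneg
    intro y
    exact Stmt15Aux.distq_nonneg q y.1 Qs.1
  by_cases hKne : Nonempty K
  · by_cases hbdd : BddAbove (Set.range fun x : K => lqN q x.1)
    · have hstep : ∀ Qs : {Q : Submodule ℝ (Fin N → ℝ) // Module.finrank ℝ Q ≤ n},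
          c * (⨆ x : K, lqN q x.1) ≤ ⨆ x : K, distq q x.1 Qs.1 := by
        intro Qs
        have hDbdd : BddAbove (Set.range fun y : K => distq q y.1 Qs.1) := by
          obtain ⟨B, hB⟩ := hbdd
          refine ⟨B, ?_⟩
          rintro _ ⟨y, rfl⟩
          exact le_trans (Stmt15Aux.distq_le_lqN q y.1 Qs.1) (hB ⟨y, rfl⟩)
        have hsupnn : 0 ≤ ⨆ y : K, distq q y.1 Qs.1 :=
          Real.iSup_nonneg fun y => Stmt15Aux.distq_nonneg q y.1 Qs.1
        have hxle : ∀ x : K, c * lqN q x.1 ≤ ⨆ y : K, distq q y.1 Qs.1 := by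
          intro x
          rcases le_or_gt (∑ j, |x.1 j| ^ q) 0 with hle | hpos
          · have hsum0 : (∑ j, |x.1 j| ^ q) = 0 :=
              le_antisymm hle (Finset.sum_nonneg fun j _ => Real.rpow_nonneg (abs_nonneg _) _)
            have hlq0 : lqN q x.1 = 0 := by
              show (∑ j, |x.1 j| ^ q) ^ (1/q) = 0
              rw [hsum0, Real.zero_rpow (by positivity : (0:ℝ) < 1/q).ne']
            rw [hlq0, mul_zero]
            exact hsupnn
          · obtain ⟨y, hyK, hy⟩ := Stmt15Aux.main_bound hq1 hq2 hε0 hε1 H htrans hK hn x.2 hpos Qs.1 Qs.2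
            rw [← hc] at hy
            calc c * lqN q x.1 ≤ distq q y Qs.1 := hy
              _ ≤ ⨆ y' : K, distq q y'.1 Qs.1 := le_ciSup hDbdd (⟨y, hyK⟩ : K)
        have hsup : (⨆ x : K, lqN q x.1) ≤ (⨆ y : K, distq q y.1 Qs.1) / c := by
          apply ciSup_le
          intro x
          rw [le_div_iff₀ hcpos]
          rw [mul_comm]
          exact hxle x
        calc c * (⨆ x : K, lqN q x.1) ≤ c * ((⨆ y : K, distq q y.1 Qs.1) / c) :=
              mul_le_mul_of_nonneg_left hsup hcpos.le
          _ = ⨆ y : K, distq q y.1 Qs.1 := by field_simp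
      exact le_ciInf hstep
    · have h0 : (⨆ x : K, lqN q x.1) = 0 := Real.iSup_of_not_bddAbove hbdd
      rw [h0, mul_zero]
      exact hdnn
  · rw [not_nonempty_iff] at hKne
    rw [Real.iSup_of_isEmpty, mul_zero]
    exact hdnn
end
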